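/- arXiv:1802.02602 — 5 statements merged into one kernel-verified Lean document; each statement's English description precedes it below -/
import Mathlib

section
/- Let a < b be reals, ω a weight on [a,b], and k, k' ∈ K_ω conjugate kernels. Then for every f ∈ L¹([a,b];ℝ): (i) I_a^{k'}(I_a^k f)(x) = ∫_a^x f(y) ω(y) dy for a.e. x ∈ [a,b], so I_a^{k'}(I_a^k f) has the absolutely continuous representative Φ(x) = ∫_a^x f(y) ω(y) dy; and (ii) for a.e. x ∈ [a,b], Φ is differentiable at x and (1/ω(x)) Φ'(x) = f(x); that is, the left-sided k'-derivative of I_a^k f equals f a.e. on [a,b]. -/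
open MeasureTheory Set

noncomputable section

/-- weight function on `[a,b]`: measurable, positive, with `ω` and `ω⁻¹` essentially bounded. -/
def IsWeight (a b : ℝ) (ω : ℝ → ℝ) : Prop :=
  Measurable ω ∧ (∀ x ∈ Icc a b, 0 < ω x) ∧
  essSup (fun x => ENNReal.ofReal (ω x)) (volume.restrict (Icc a b)) < ⊤ ∧
  essSup (fun x => ENNReal.ofReal (ω x)⁻¹) (volume.restrict (Icc a b)) < ⊤

/-- `F_k(y) = ∫_y^b k(x,y) ω(x) dx`. -/
def Fker (b : ℝ) (ω : ℝ → ℝ) (k : ℝ → ℝ → ℝ) (y : ℝ) : ℝ :=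
  ∫ x in y..b, k x y * ω x

/-- `G_k(y) = ∫_a^y k(y,x) ω(x) dx`. -/
def Gker (a : ℝ) (ω : ℝ → ℝ) (k : ℝ → ℝ → ℝ) (y : ℝ) : ℝ :=
  ∫ x in a..y, k y x * ω x

/-- membership in the kernel class `K_ω`. -/
def MemK (a b : ℝ) (ω : ℝ → ℝ) (k : ℝ → ℝ → ℝ) : Prop :=
  Measurable (Function.uncurry k) ∧
  (∀ x y : ℝ, a ≤ y → y < x → x ≤ b → 0 < k x y) ∧
  essSup (fun y => ENNReal.ofReal (Fker b ω k y)) (volume.restrict (Ico a b)) < ⊤ ∧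
  essSup (fun y => ENNReal.ofReal (Gker a ω k y)) (volume.restrict (Ioc a b)) < ⊤

/-- `δ_{k₁,k₂}(x,y) = ∫_y^x k₁(x,z) k₂(z,y) ω(z) dz`. -/
def deltaK (ω : ℝ → ℝ) (k₁ k₂ : ℝ → ℝ → ℝ) (x y : ℝ) : ℝ :=
  ∫ z in y..x, k₁ x z * k₂ z y * ω z

/-- `k₁ R k₂` : `0 < δ_{k₁,k₂}(x,y) < ∞` on `Ω` (finiteness as interval integrability). -/
def relR (a b : ℝ) (ω : ℝ → ℝ) (k₁ k₂ : ℝ → ℝ → ℝ) : Prop :=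
  ∀ x y : ℝ, a ≤ y → y < x → x ≤ b →
    0 < deltaK ω k₁ k₂ x y ∧
    IntervalIntegrable (fun z => k₁ x z * k₂ z y * ω z) volume y x

/-- conjugate kernels. -/
def Conjugate (a b : ℝ) (ω : ℝ → ℝ) (k k' : ℝ → ℝ → ℝ) : Prop :=
  ∀ x y : ℝ, a ≤ y → y < x → x ≤ b →
    deltaK ω k k' x y = 1 ∧ deltaK ω k' k x y = 1

/-- left-sided `k`-integral. -/
def Ia (a : ℝ) (ω : ℝ → ℝ) (k : ℝ → ℝ → ℝ) (f : ℝ → ℝ) (x : ℝ) : ℝ :=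
  ∫ y in a..x, k x y * f y * ω y

/-- right-sided `k`-integral. -/
def Ib (b : ℝ) (ω : ℝ → ℝ) (k : ℝ → ℝ → ℝ) (f : ℝ → ℝ) (x : ℝ) : ℝ :=
  ∫ y in x..b, k y x * f y * ω y



open Filter in
lemma ae_hasDerivAt_integral (c : ℝ) (g : ℝ → ℝ) (hg : Integrable g volume) :
    ∀ᵐ x ∂(volume : Measure ℝ), HasDerivAt (fun t => ∫ y in c..t, g y) (g x) x := by
  set v := IsUnifLocDoublingMeasure.vitaliFamily (volume : Measure ℝ) 1 with hv
  filter_upwards [v.ae_tendsto_average hg.locallyIntegrable] with x hx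
  rw [hasDerivAt_iff_tendsto_slope, ← nhdsLT_sup_nhdsGT, tendsto_sup]
  have hint : ∀ u t : ℝ, (∫ y in c..t, g y) - ∫ y in c..u, g y = ∫ y in u..t, g y := by
    intro u t
    exact intervalIntegral.integral_interval_sub_left hg.intervalIntegrable hg.intervalIntegrable
  constructor
  · have h2 := hx.comp (Real.tendsto_Icc_vitaliFamily_left x)
    refine h2.congr' ?_
    filter_upwards [self_mem_nhdsWithin] with t (ht : t < x)
    show ⨍ y in Icc t x, g y = slope (fun t => ∫ y in c..t, g y) x t
    rw [slope_def_field, div_eq_inv_mul, hint, setAverage_eq,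
      MeasureTheory.integral_Icc_eq_integral_Ioc, Real.volume_real_Icc_of_le ht.le,
      ← intervalIntegral.integral_of_le ht.le,
      smul_eq_mul, intervalIntegral.integral_symm t x]
    have h3 : t - x = -(x - t) := by ring
    rw [h3, inv_neg, neg_mul_neg]
  · have h2 := hx.comp (Real.tendsto_Icc_vitaliFamily_right x)
    refine h2.congr' ?_
    filter_upwards [self_mem_nhdsWithin] with t (ht : x < t)
    show ⨍ y in Icc x t, g y = slope (fun t => ∫ y in c..t, g y) x t
    rw [slope_def_field, div_eq_inv_mul, hint, setAverage_eq,
      MeasureTheory.integral_Icc_eq_integral_Ioc, Real.volume_real_Icc_of_le ht.le,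
      ← intervalIntegral.integral_of_le ht.le, smul_eq_mul]

lemma key_eq (a b : ℝ) (ω : ℝ → ℝ) (hω1 : Measurable ω) (hω2 : ∀ t ∈ Icc a b, 0 < ω t)
    (k k' : ℝ → ℝ → ℝ) (hkm : Measurable (Function.uncurry k))
    (hk'm : Measurable (Function.uncurry k'))
    (hkpos : ∀ x y : ℝ, a ≤ y → y < x → x ≤ b → 0 < k x y)
    (hk'pos : ∀ x y : ℝ, a ≤ y → y < x → x ≤ b → 0 < k' x y)
    (hconj : ∀ u v : ℝ, a ≤ v → v < u → u ≤ b → deltaK ω k' k u v = 1)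
    (f : ℝ → ℝ) (hf : IntegrableOn f (Icc a b))
    (hfω : IntegrableOn (fun y => f y * ω y) (Icc a b))
    (x : ℝ) (hax : a < x) (hxb : x ≤ b) :
    Ia a ω k' (Ia a ω k f) x = ∫ y in a..x, f y * ω y := by
  set μx := volume.restrict (Ioc a x) with hμx
  have hsub : Ioc a x ⊆ Icc a b := fun t ht => ⟨ht.1.le, ht.2.trans hxb⟩
  have hfae : AEMeasurable f μx :=
    hf.aestronglyMeasurable.aemeasurable.mono_measure (Measure.restrict_mono hsub le_rfl)
  set T : ℝ × ℝ → ℝ :=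
    fun p => {q : ℝ × ℝ | q.2 ≤ q.1}.indicator (fun q => k q.1 q.2 * f q.2 * ω q.2) p with hT
  set G : ℝ × ℝ → ℝ := fun p => k' x p.1 * T p * ω p.1 with hG
  -- a.e. measurability of G w.r.t. the product measure
  have hk'x : Measurable fun p : ℝ × ℝ => k' x p.1 :=
    hk'm.comp (measurable_const.prodMk measurable_fst)
  have hTae : AEMeasurable T (μx.prod μx) := by
    refine AEMeasurable.indicator ?_ (measurableSet_le measurable_snd measurable_fst)
    exact ((hkm.aemeasurable.mul (hfae.comp_snd)).mul ((hω1.comp measurable_snd).aemeasurable))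
  have hGaesm : AEStronglyMeasurable G (μx.prod μx) :=
    (((hk'x.aemeasurable.mul hTae).mul
      ((hω1.comp measurable_fst).aemeasurable)).aestronglyMeasurable)
  -- conjugacy facts
  have hδint : ∀ z : ℝ, a < z → z < x →
      IntegrableOn (fun y => k' x y * k y z * ω y) (Ioc z x) := by
    intro z haz hzx
    have h1 := hconj x z haz.le hzx hxb
    rw [deltaK] at h1
    by_contra h
    have : ¬ IntervalIntegrable (fun y => k' x y * k y z * ω y) volume z x := by
      intro h2; exact h (h2.1)
    rw [intervalIntegral.integral_undef this] at h1
    norm_num at h1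
  have hδ1 : ∀ z : ℝ, a < z → z < x →
      ∫ y in Ioc z x, k' x y * k y z * ω y = 1 := by
    intro z haz hzx
    have h1 := hconj x z haz.le hzx hxb
    rwa [deltaK, intervalIntegral.integral_of_le hzx.le] at h1
  -- ae facts on μx
  have hne_x : ∀ᵐ t ∂μx, t ≠ x := by
    rw [hμx, ae_restrict_iff' measurableSet_Ioc]
    have : (volume : Measure ℝ) {x} = 0 := measure_singleton x
    filter_upwards [measure_eq_zero_iff_ae_notMem.1 this] with t ht _
    simpa using ht
  -- Step 1: LHS as iterated integral
  have hinner : ∀ y ∈ Ioc a x, k' x y * (Ia a ω k f y) * ω y = ∫ z, G (y, z) ∂μx := by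
    intro y hy
    have h1 : (fun z => G (y, z)) =
        fun z => k' x y * ((Iic y).indicator (fun z => k y z * f z * ω z) z) * ω y := by
      funext z
      by_cases hzy : z ≤ y
      · simp [hG, hT, indicator, hzy]
      · simp [hG, hT, indicator, hzy]
    rw [h1]
    rw [MeasureTheory.integral_mul_const, MeasureTheory.integral_const_mul,
      setIntegral_indicator measurableSet_Iic, Ioc_inter_Iic, min_eq_right hy.2,
      Ia, intervalIntegral.integral_of_le hy.1.le]
  have stepL : Ia a ω k' (Ia a ω k f) x = ∫ y, (∫ z, G (y, z) ∂μx) ∂μx := by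
    rw [Ia, intervalIntegral.integral_of_le hax.le]
    exact setIntegral_congr_fun measurableSet_Ioc (fun y hy => hinner y hy)
  -- Step 2: integrability of G on the product
  have hG' : Integrable G (μx.prod μx) := by
    refine ⟨hGaesm, ?_⟩
    rw [hasFiniteIntegral_iff_norm, lintegral_prod_symm _
      (hGaesm.norm.aemeasurable.ennreal_ofReal)]
    have hb : ∀ᵐ z ∂μx, (∫⁻ y, ENNReal.ofReal ‖G (y, z)‖ ∂μx) =
        ENNReal.ofReal (|f z| * ω z) := by
      filter_upwards [ae_restrict_mem measurableSet_Ioc, hne_x] with z hz hzx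
      have hzx' : z < x := lt_of_le_of_ne hz.2 hzx
      have e1 : ∀ᵐ y ∂μx, ENNReal.ofReal ‖G (y, z)‖ =
          (Ioc z x).indicator (fun y => ENNReal.ofReal (k' x y * k y z * ω y)) y *
            ENNReal.ofReal (|f z| * ω z) := by
        filter_upwards [ae_restrict_mem measurableSet_Ioc, hne_x,
          (by rw [hμx, ae_restrict_iff' measurableSet_Ioc]
              filter_upwards [measure_eq_zero_iff_ae_notMem.1 (measure_singleton z)] with t ht _
              simpa using ht : ∀ᵐ t ∂μx, t ≠ z)] with y hy hyx hyz
        by_cases hc : z < y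
        · have hyx' : y < x := lt_of_le_of_ne hy.2 hyx
          have hyIcc : y ∈ Icc a b := hsub hy
          have hzIcc : z ∈ Icc a b := hsub ⟨hz.1, hz.2⟩
          have p1 : 0 < k' x y := hk'pos x y hy.1.le hyx' hxb
          have p2 : 0 < k y z := hkpos y z hz.1.le hc (hyIcc.2)
          have p3 : 0 < ω y := hω2 y hyIcc
          have p4 : 0 < ω z := hω2 z hzIcc
          have hmem : y ∈ Ioc z x := ⟨hc, hy.2⟩
          rw [indicator_of_mem hmem]
          have hGval : G (y, z) = k' x y * (k y z * f z * ω z) * ω y := by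
            have : ((y, z) : ℝ × ℝ) ∈ {q : ℝ × ℝ | q.2 ≤ q.1} := hc.le
            simp [hG, hT, indicator_of_mem this]
          rw [hGval]
          rw [Real.norm_eq_abs, ← ENNReal.ofReal_mul (by positivity)]
          congr 1
          rw [abs_mul, abs_mul, abs_mul, abs_mul, abs_of_pos p1, abs_of_pos p2,
            abs_of_pos p3, abs_of_pos p4]
          ring
        · have hyz' : y < z := lt_of_le_of_ne (not_lt.1 hc) hyz
          have hGval : G (y, z) = 0 := by
            have : ((y, z) : ℝ × ℝ) ∉ {q : ℝ × ℝ | q.2 ≤ q.1} := not_le.2 hyz'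
            simp [hG, hT, indicator_of_notMem this]
          rw [hGval, indicator_of_notMem (fun hm => absurd hm.1 (not_lt.2 hyz'.le))]
          simp
      rw [lintegral_congr_ae e1, lintegral_mul_const'' _
        ((AEMeasurable.indicator (by fun_prop) measurableSet_Ioc)),
        lintegral_indicator measurableSet_Ioc, hμx, Measure.restrict_restrict measurableSet_Ioc,
        inter_eq_self_of_subset_left (Ioc_subset_Ioc_left hz.1.le)]
      rw [← ofReal_integral_eq_lintegral_ofReal (hδint z hz.1 hzx')]
      · rw [hδ1 z hz.1 hzx']
        simp
      · rw [Filter.EventuallyLE, ae_restrict_iff' measurableSet_Ioc]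
        filter_upwards [measure_eq_zero_iff_ae_notMem.1 (measure_singleton x)] with y hyx hy
        have hyx' : y < x := lt_of_le_of_ne hy.2 (by simpa using hyx)
        have hyIcc : y ∈ Icc a b := ⟨hz.1.le.trans hy.1.le, hy.2.trans hxb⟩
        have p1 : 0 < k' x y := hk'pos x y hyIcc.1 hyx' hxb
        have p2 : 0 < k y z := hkpos y z (hsub ⟨hz.1, hz.2⟩).1 hy.1 hyIcc.2
        have p3 : 0 < ω y := hω2 y hyIcc
        positivity
    rw [lintegral_congr_ae hb]
    have hint2 : IntegrableOn (fun z => f z * ω z) (Ioc a x) := hfω.mono_set hsub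
    have := hint2.2
    rw [hasFiniteIntegral_iff_norm] at this
    refine lt_of_le_of_lt (le_of_eq (lintegral_congr_ae ?_)) this
    filter_upwards [ae_restrict_mem measurableSet_Ioc] with z hz
    have p4 : 0 < ω z := hω2 z (hsub hz)
    rw [Real.norm_eq_abs, abs_mul, abs_of_pos p4]
  -- Step 3: swap
  have swap : (∫ y, (∫ z, G (y, z) ∂μx) ∂μx) = ∫ z, (∫ y, G (y, z) ∂μx) ∂μx :=
    integral_integral_swap hG'
  -- Step 4: compute the swapped integral
  have stepR : (∫ z, (∫ y, G (y, z) ∂μx) ∂μx) = ∫ z, f z * ω z ∂μx := by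
    apply integral_congr_ae
    filter_upwards [ae_restrict_mem measurableSet_Ioc, hne_x] with z hz hzx
    have hzx' : z < x := lt_of_le_of_ne hz.2 hzx
    have e2 : ∀ᵐ y ∂μx, G (y, z) =
        (Ioc z x).indicator (fun y => k' x y * k y z * ω y) y * (f z * ω z) := by
      filter_upwards [ae_restrict_mem measurableSet_Ioc,
        (by rw [hμx, ae_restrict_iff' measurableSet_Ioc]
            filter_upwards [measure_eq_zero_iff_ae_notMem.1 (measure_singleton z)] with t ht _
            simpa using ht : ∀ᵐ t ∂μx, t ≠ z)] with y hy hyz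
      by_cases hc : z < y
      · have hmem : y ∈ Ioc z x := ⟨hc, hy.2⟩
        rw [indicator_of_mem hmem]
        have : ((y, z) : ℝ × ℝ) ∈ {q : ℝ × ℝ | q.2 ≤ q.1} := hc.le
        simp only [hG, hT, indicator_of_mem this]
        ring
      · have hyz' : y < z := lt_of_le_of_ne (not_lt.1 hc) hyz
        have : ((y, z) : ℝ × ℝ) ∉ {q : ℝ × ℝ | q.2 ≤ q.1} := not_le.2 hyz'
        rw [indicator_of_notMem (fun hm => absurd hm.1 (not_lt.2 hyz'.le))]
        simp [hG, hT, indicator_of_notMem this]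
    rw [integral_congr_ae e2, MeasureTheory.integral_mul_const,
      setIntegral_indicator measurableSet_Ioc,
      inter_eq_self_of_subset_right (Ioc_subset_Ioc_left hz.1.le),
      hδ1 z hz.1 hzx', one_mul]
  rw [stepL, swap, stepR, hμx, intervalIntegral.integral_of_le hax.le]

/-- if `k` and `k'` are conjugate kernels, then for `f ∈ L¹([a,b])`:
(i) `I_a^{k'}(I_a^k f)(x) = ∫_a^x f(y) ω(y) dy` a.e., so `Φ(x) = ∫_a^x f(y) ω(y) dy` is an
absolutely continuous representative of `I_a^{k'}(I_a^k f)`; and (ii) for a.e. `x ∈ [a,b]`,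
`Φ` is differentiable at `x` with `(1/ω(x)) Φ'(x) = f(x)`; i.e. `D_a^{k'}(I_a^k f) = f` a.e. -/
theorem stmt9 (a b : ℝ) (hab : a < b) (ω : ℝ → ℝ) (hω : IsWeight a b ω)
    (k k' : ℝ → ℝ → ℝ) (hk : MemK a b ω k) (hk' : MemK a b ω k')
    (hconj : Conjugate a b ω k k')
    (f : ℝ → ℝ) (hf : IntegrableOn f (Icc a b)) :
    (∀ᵐ x ∂(volume.restrict (Icc a b)),
      Ia a ω k' (Ia a ω k f) x = ∫ y in a..x, f y * ω y) ∧
    (∀ᵐ x ∂(volume.restrict (Icc a b)),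
      DifferentiableAt ℝ (fun t => ∫ y in a..t, f y * ω y) x ∧
      (ω x)⁻¹ * deriv (fun t => ∫ y in a..t, f y * ω y) x = f x) := by
  obtain ⟨hω1, hω2, hω3, hω4⟩ := hω
  -- f * ω is integrable on Icc a b
  have hfω : IntegrableOn (fun y => f y * ω y) (Icc a b) := by
    have hb : ∀ᵐ y ∂(volume.restrict (Icc a b)),
        ENNReal.ofReal (ω y) ≤ essSup (fun x => ENNReal.ofReal (ω x)) (volume.restrict (Icc a b)) :=
      ae_le_essSup
    refine Integrable.mono' (hf.norm.const_mul
      (essSup (fun x => ENNReal.ofReal (ω x)) (volume.restrict (Icc a b))).toReal)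
      (hf.aestronglyMeasurable.mul hω1.aestronglyMeasurable) ?_
    filter_upwards [hb, ae_restrict_mem measurableSet_Icc] with y hy hyI
    have hω0 : 0 < ω y := hω2 y hyI
    have : ω y ≤ (essSup (fun x => ENNReal.ofReal (ω x)) (volume.restrict (Icc a b))).toReal :=
      (ENNReal.ofReal_le_iff_le_toReal hω3.ne).1 hy
    have h1 : ‖f y * ω y‖ = ‖f y‖ * ω y := by
      rw [norm_mul, Real.norm_eq_abs (ω y), abs_of_pos hω0]
    rw [h1, mul_comm _ ‖f y‖]
    exact mul_le_mul_of_nonneg_left this (norm_nonneg _)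
  constructor
  · -- part (i)
    have hne_a : ∀ᵐ x ∂(volume.restrict (Icc a b)), x ≠ a := by
      refine ae_restrict_of_ae ?_
      filter_upwards [measure_eq_zero_iff_ae_notMem.1 (measure_singleton a)] with x hx
      simpa using hx
    filter_upwards [ae_restrict_mem measurableSet_Icc, hne_a] with x hxI hxa
    exact key_eq a b ω hω1 hω2 k k' hk.1 hk'.1 hk.2.1 hk'.2.1
      (fun u v h1 h2 h3 => (hconj u v h1 h2 h3).2) f hf hfω x
      (lt_of_le_of_ne hxI.1 (Ne.symm hxa)) hxI.2
  · -- part (ii)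
    set g : ℝ → ℝ := (Icc a b).indicator (fun y => f y * ω y) with hgdef
    have hg : Integrable g volume := (integrable_indicator_iff measurableSet_Icc).2 hfω
    have hΨ := ae_hasDerivAt_integral a g hg
    have hIoo : ∀ᵐ x ∂(volume.restrict (Icc a b)), x ∈ Ioo a b := by
      have h2 : ∀ᵐ x ∂(volume.restrict (Icc a b)), x ≠ a ∧ x ≠ b := by
        refine ae_restrict_of_ae ?_
        have : (volume : Measure ℝ) {a, b} = 0 :=
          Set.Countable.measure_zero (Set.to_countable _) _
        filter_upwards [measure_eq_zero_iff_ae_notMem.1 this] with x hx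
        simp only [Set.mem_insert_iff, Set.mem_singleton_iff] at hx
        push_neg at hx
        exact hx
      filter_upwards [h2, ae_restrict_mem measurableSet_Icc] with x hx hxI
      exact ⟨lt_of_le_of_ne hxI.1 (Ne.symm hx.1), lt_of_le_of_ne hxI.2 hx.2⟩
    filter_upwards [ae_restrict_of_ae hΨ, hIoo, ae_restrict_mem measurableSet_Icc]
      with x hder hxIoo hxIcc
    have heq : (fun t => ∫ y in a..t, f y * ω y) =ᶠ[nhds x] (fun t => ∫ y in a..t, g y) := by
      filter_upwards [isOpen_Ioo.mem_nhds hxIoo] with t ht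
      refine intervalIntegral.integral_congr fun y hy => ?_
      have hy' : y ∈ Icc a b := by
        have : uIcc a t ⊆ Icc a b := uIcc_subset_Icc ⟨le_refl a, hab.le⟩ ⟨ht.1.le, ht.2.le⟩
        exact this hy
      rw [hgdef, indicator_of_mem hy']
    have hΦ : HasDerivAt (fun t => ∫ y in a..t, f y * ω y) (g x) x :=
      hder.congr_of_eventuallyEq heq
    refine ⟨hΦ.differentiableAt, ?_⟩
    rw [hΦ.deriv, hgdef, indicator_of_mem hxIcc]
    have hω0 := (hω2 x hxIcc).ne'
    field_simp

end
end

section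
/- Let a < b be reals, ω a weight on [a,b], and k, k' ∈ K_ω conjugate kernels. Let f ∈ L¹([a,b];ℝ) be such that f(x) = (I_a^k φ)(x) for a.e. x ∈ [a,b] for some φ ∈ L¹([a,b];ℝ). Then I_a^{k'} f agrees a.e. with the absolutely continuous function Ψ(x) = ∫_a^x φ(y) ω(y) dy, the left-sided k'-derivative satisfies (D_a^{k'} f)(x) = φ(x) for a.e. x ∈ [a,b], and consequently I_a^k(D_a^{k'} f)(x) = f(x) for a.e. x ∈ [a,b]. -/
open MeasureTheory Set

noncomputable section

open Filter intervalIntegral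
open scoped Topology

lemma hne_ae (c : ℝ) : ∀ᵐ x : ℝ ∂volume, x ≠ c := by
  rw [ae_iff]
  have : {x : ℝ | ¬ x ≠ c} = {c} := by ext y; simp
  rw [this]; exact measure_singleton c

lemma mul_weight_integrable {a b : ℝ} {ω : ℝ → ℝ} (hω : IsWeight a b ω)
    {φ : ℝ → ℝ} (hφ : IntegrableOn φ (Icc a b)) :
    IntegrableOn (fun z => φ z * ω z) (Icc a b) := by
  set E := essSup (fun x => ENNReal.ofReal (ω x)) (volume.restrict (Icc a b)) with hE
  have hEtop : E ≠ ⊤ := hω.2.2.1.ne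
  have hae : ∀ᵐ x ∂volume.restrict (Icc a b), ENNReal.ofReal (ω x) ≤ E :=
    ENNReal.ae_le_essSup _
  refine Integrable.mono' (hφ.norm.const_mul E.toReal)
    (hφ.aestronglyMeasurable.mul hω.1.aestronglyMeasurable) ?_
  filter_upwards [hae, ae_restrict_mem measurableSet_Icc] with z hz hz2
  have hω0 : 0 < ω z := hω.2.1 z hz2
  have hωle : ω z ≤ E.toReal := by
    have := ENNReal.toReal_mono hEtop hz
    rwa [ENNReal.toReal_ofReal hω0.le] at this
  rw [norm_mul]
  calc ‖φ z‖ * ‖ω z‖ ≤ ‖φ z‖ * E.toReal := by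
        refine mul_le_mul_of_nonneg_left ?_ (norm_nonneg _)
        rw [Real.norm_eq_abs, abs_of_pos hω0]; exact hωle
    _ = E.toReal * ‖φ z‖ := mul_comm _ _

lemma part1 (a b : ℝ) (hab : a < b) (ω : ℝ → ℝ) (hω : IsWeight a b ω)
    (k k' : ℝ → ℝ → ℝ) (hk : MemK a b ω k) (hk' : MemK a b ω k')
    (hconj : Conjugate a b ω k k')
    (f φ : ℝ → ℝ) (hf : IntegrableOn f (Icc a b)) (hφ : IntegrableOn φ (Icc a b))
    (hrep : ∀ᵐ x ∂(volume.restrict (Icc a b)), f x = Ia a ω k φ x) :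
    ∀ᵐ x ∂(volume.restrict (Icc a b)), Ia a ω k' f x = ∫ y in a..x, φ y * ω y := by
  have hφω : IntegrableOn (fun z => φ z * ω z) (Icc a b) := mul_weight_integrable hω hφ
  filter_upwards [ae_restrict_mem measurableSet_Icc, ae_restrict_of_ae (hne_ae a)] with x hx hxa
  have hax : a < x := lt_of_le_of_ne hx.1 (Ne.symm hxa)
  have hxb : x ≤ b := hx.2
  have hsub : Ioc a x ⊆ Icc a b := fun t ht => ⟨ht.1.le, ht.2.trans hxb⟩
  -- the kernel product is integrable and integrates to 1
  have hker : ∀ z : ℝ, a < z → z < x →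
      IntegrableOn (fun y => k' x y * k y z * ω y) (Ioc z x) ∧
      (∫ y in Ioc z x, k' x y * k y z * ω y) = 1 := by
    intro z hz1 hz2
    have hc := (hconj x z hz1.le hz2 hxb).2
    rw [deltaK, intervalIntegral.integral_of_le hz2.le] at hc
    refine ⟨?_, hc⟩
    by_contra hni
    rw [integral_undef hni] at hc
    exact zero_ne_one hc
  -- F y z
  set F : ℝ → ℝ → ℝ := fun y z =>
    (Ioc a y).indicator (fun z => k y z * φ z * ω z) z * (k' x y * ω y) with hF
  -- sections in y for fixed z
  have hFsec : ∀ z : ℝ, a < z → (fun y => F y z) =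
      (Ici z).indicator (fun y => (k' x y * k y z * ω y) * (φ z * ω z)) := by
    intro z hz
    funext y
    by_cases hzy : z ≤ y
    · rw [indicator_of_mem (Set.mem_Ici.mpr hzy)]
      simp only [hF]
      rw [indicator_of_mem (Set.mem_Ioc.mpr ⟨hz, hzy⟩)]
      ring
    · rw [indicator_of_notMem (by simpa using hzy)]
      simp only [hF]
      rw [indicator_of_notMem (by simp only [Set.mem_Ioc, not_and]; exact fun _ => hzy), zero_mul]
  have hIciIoc : ∀ z : ℝ, a < z → z ≤ x → Ici z ∩ Ioc a x = Icc z x := by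
    intro z hz1 hz2; ext y
    simp only [mem_inter_iff, mem_Ici, mem_Ioc, mem_Icc]
    constructor
    · rintro ⟨h1, _, h3⟩; exact ⟨h1, h3⟩
    · rintro ⟨h1, h2⟩; exact ⟨h1, hz1.trans_le h1, h2⟩
  have hT : MeasurableSet {p : ℝ × ℝ | a < p.2 ∧ p.2 ≤ p.1} :=
    (measurableSet_lt measurable_const measurable_snd).inter
      (measurableSet_le measurable_snd measurable_fst)
  have hM : Measurable (fun p : ℝ × ℝ => k p.1 p.2 * ω p.2 * (k' x p.1 * ω p.1)) := by
    have h1 : Measurable fun p : ℝ × ℝ => k p.1 p.2 := hk.1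
    have h2 : Measurable fun p : ℝ × ℝ => k' x p.1 :=
      hk'.1.comp (measurable_const.prodMk measurable_fst)
    exact (h1.mul (hω.1.comp measurable_snd)).mul (h2.mul (hω.1.comp measurable_fst))
  have hFeq : Function.uncurry F = fun p : ℝ × ℝ =>
      ({p : ℝ × ℝ | a < p.2 ∧ p.2 ≤ p.1}.indicator
        (fun p => k p.1 p.2 * ω p.2 * (k' x p.1 * ω p.1)) p) * φ p.2 := by
    funext p
    rcases p with ⟨y, z⟩
    show F y z = _
    by_cases hmem : a < z ∧ z ≤ y
    · simp only [hF]
      rw [indicator_of_mem (Set.mem_Ioc.mpr hmem),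
        indicator_of_mem (by exact hmem : (y, z) ∈ {p : ℝ × ℝ | a < p.2 ∧ p.2 ≤ p.1})]
      ring
    · simp only [hF]
      rw [indicator_of_notMem (by simpa [Set.mem_Ioc] using hmem),
        indicator_of_notMem (by exact hmem : (y, z) ∉ {p : ℝ × ℝ | a < p.2 ∧ p.2 ≤ p.1})]
      simp
  have hμle : volume.restrict (Ioc a x) ≤ volume.restrict (Icc a b) :=
    Measure.restrict_mono hsub le_rfl
  have hφsnd : AEStronglyMeasurable (fun p : ℝ × ℝ => φ p.2)
      ((volume.restrict (Ioc a x)).prod (volume.restrict (Ioc a x))) :=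
    (hφ.aestronglyMeasurable.mono_measure hμle).comp_snd
  have hAESM : AEStronglyMeasurable (Function.uncurry F)
      ((volume.restrict (Ioc a x)).prod (volume.restrict (Ioc a x))) := by
    rw [hFeq]
    exact ((hM.indicator hT).aestronglyMeasurable).mul hφsnd
  have hsecInt : ∀ z : ℝ, a < z → z < x →
      Integrable (fun y => F y z) (volume.restrict (Ioc a x)) := by
    intro z hz1 hz2
    rw [hFsec z hz1, integrable_indicator_iff measurableSet_Ici, IntegrableOn,
      Measure.restrict_restrict measurableSet_Ici, hIciIoc z hz1 hz2.le]
    exact ((hker z hz1 hz2).1.congr_set_ae Ioc_ae_eq_Icc.symm).mul_const _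
  have hpos : ∀ z : ℝ, a < z → z < x → ∀ᵐ y ∂volume.restrict (Ioc z x),
      0 < k' x y * k y z * ω y := by
    intro z hz1 hz2
    filter_upwards [ae_restrict_mem measurableSet_Ioc, ae_restrict_of_ae (hne_ae x)] with y hy hyx
    have hyx' : y < x := lt_of_le_of_ne hy.2 hyx
    have hay : a ≤ y := (hz1.trans hy.1).le
    have hyb : y ≤ b := hyx'.le.trans hxb
    exact mul_pos (mul_pos (hk'.2.1 x y hay hyx' hxb) (hk.2.1 y z hz1.le hy.1 hyb))
      (hω.2.1 y ⟨hay, hyb⟩)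
  have hnormint : ∀ z : ℝ, a < z → z < x →
      (∫ y in Ioc a x, ‖F y z‖) = ‖φ z * ω z‖ := by
    intro z hz1 hz2
    have hp : ∀ y, F y z = (Ici z).indicator (fun y => k' x y * k y z * ω y * (φ z * ω z)) y :=
      fun y => congrFun (hFsec z hz1) y
    simp only [hp, norm_indicator_eq_indicator_norm]
    rw [setIntegral_indicator measurableSet_Ici, Set.inter_comm, hIciIoc z hz1 hz2.le,
      setIntegral_congr_set Ioc_ae_eq_Icc.symm]
    calc (∫ y in Ioc z x, ‖(k' x y * k y z * ω y) * (φ z * ω z)‖)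
        = ∫ y in Ioc z x, (k' x y * k y z * ω y) * ‖φ z * ω z‖ := by
          refine integral_congr_ae ?_
          filter_upwards [hpos z hz1 hz2] with y hy
          rw [norm_mul, Real.norm_eq_abs (k' x y * k y z * ω y), abs_of_pos hy]
      _ = (∫ y in Ioc z x, k' x y * k y z * ω y) * ‖φ z * ω z‖ := by
          rw [MeasureTheory.integral_mul_const]
      _ = ‖φ z * ω z‖ := by rw [(hker z hz1 hz2).2, one_mul]
  have hinner : ∀ z : ℝ, a < z → z < x →
      (∫ y in Ioc a x, F y z) = φ z * ω z := by
    intro z hz1 hz2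
    have hp : ∀ y, F y z = (Ici z).indicator (fun y => k' x y * k y z * ω y * (φ z * ω z)) y :=
      fun y => congrFun (hFsec z hz1) y
    simp only [hp]
    rw [setIntegral_indicator measurableSet_Ici, Set.inter_comm, hIciIoc z hz1 hz2.le,
      setIntegral_congr_set Ioc_ae_eq_Icc.symm, MeasureTheory.integral_mul_const, (hker z hz1 hz2).2, one_mul]
  have hprod : Integrable (Function.uncurry F)
      ((volume.restrict (Ioc a x)).prod (volume.restrict (Ioc a x))) := by
    rw [MeasureTheory.integrable_prod_iff' hAESM]
    constructor
    · filter_upwards [ae_restrict_mem measurableSet_Ioc, ae_restrict_of_ae (hne_ae x)] with z hz hzx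
      exact hsecInt z hz.1 (lt_of_le_of_ne hz.2 hzx)
    · refine ((hφω.mono_set hsub).norm).congr ?_
      filter_upwards [ae_restrict_mem measurableSet_Ioc, ae_restrict_of_ae (hne_ae x)] with z hz hzx
      exact (hnormint z hz.1 (lt_of_le_of_ne hz.2 hzx)).symm
  have hrep' : ∀ᵐ y ∂volume.restrict (Ioc a x), f y = Ia a ω k φ y :=
    ae_restrict_of_ae_restrict_of_subset hsub hrep
  rw [Ia, intervalIntegral.integral_of_le hax.le]
  have step1 : (∫ y in Ioc a x, k' x y * f y * ω y)
      = ∫ y in Ioc a x, ∫ z in Ioc a x, F y z := by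
    refine integral_congr_ae ?_
    filter_upwards [hrep', ae_restrict_mem measurableSet_Ioc] with y hy1 hy2
    rw [hy1, Ia, intervalIntegral.integral_of_le hy2.1.le]
    have hIa : (∫ z in Ioc a x, F y z)
        = (∫ z in Ioc a y, k y z * φ z * ω z) * (k' x y * ω y) := by
      simp only [hF]
      rw [MeasureTheory.integral_mul_const, setIntegral_indicator measurableSet_Ioc,
        show Ioc a x ∩ Ioc a y = Ioc a y from by
          rw [Set.Ioc_inter_Ioc]; simp [min_eq_right hy2.2]]
    rw [hIa]; ring
  rw [step1, MeasureTheory.integral_integral_swap hprod, intervalIntegral.integral_of_le hax.le]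
  refine integral_congr_ae ?_
  filter_upwards [ae_restrict_mem measurableSet_Ioc, ae_restrict_of_ae (hne_ae x)] with z hz hzx
  exact hinner z hz.1 (lt_of_le_of_ne hz.2 hzx)

lemma avg_bound (G : ℝ → ℝ) (hGint : Integrable G volume) (u v : ℝ) (huv : u < v) (c : ℝ) :
    ‖(∫ t in Icc u v, G t) / (v - u) - c‖ ≤ ⨍ t in Icc u v, ‖G t - c‖ := by
  have hvol : (volume (Icc u v)).toReal = v - u := by
    rw [Real.volume_Icc, ENNReal.toReal_ofReal (by linarith)]
  have hcint : IntegrableOn (fun _ : ℝ => c) (Icc u v) volume :=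
    integrableOn_const (by simp [Real.volume_Icc])
  have h1 : ∫ t in Icc u v, (G t - c) = (∫ t in Icc u v, G t) - (v - u) * c := by
    rw [integral_sub hGint.integrableOn hcint, setIntegral_const, measureReal_def, hvol, smul_eq_mul]
  have h2 : (∫ t in Icc u v, G t) / (v - u) - c = (∫ t in Icc u v, (G t - c)) / (v - u) := by
    rw [h1, sub_div, mul_div_cancel_left₀ _ (by intro h; nlinarith [sub_eq_zero.mp h] : v - u ≠ 0)]
  rw [h2, setAverage_eq, measureReal_def, hvol, smul_eq_mul]
  rw [Real.norm_eq_abs, abs_div, abs_of_pos (by linarith : (0:ℝ) < v - u), div_le_iff₀ (by linarith)]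
  have hn := MeasureTheory.norm_integral_le_integral_norm (f := fun t => G t - c) (μ := volume.restrict (Icc u v))
  calc |∫ t in Icc u v, (G t - c)| ≤ ∫ t in Icc u v, ‖G t - c‖ := hn
    _ = (v - u)⁻¹ * (∫ t in Icc u v, ‖G t - c‖) * (v - u) := by
        rw [mul_comm ((v - u)⁻¹) _, mul_assoc, inv_mul_cancel₀ (by intro h; nlinarith [sub_eq_zero.mp h] : v - u ≠ 0), mul_one]

lemma aeFTC {a b : ℝ} {g : ℝ → ℝ} (hg : IntegrableOn g (Icc a b)) :
    ∀ᵐ x ∂(volume.restrict (Icc a b)),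
      HasDerivAt (fun t => ∫ s in a..t, g s) (g x) x := by
  set G : ℝ → ℝ := (Icc a b).indicator g with hGdef
  have hGint : Integrable G volume := (integrable_indicator_iff measurableSet_Icc).2 hg
  set v := IsUnifLocDoublingMeasure.vitaliFamily (volume : Measure ℝ) 1 with hv
  have hLp := v.ae_tendsto_average_norm_sub hGint.locallyIntegrable
  have h1 : ∀ᵐ x ∂(volume.restrict (Icc a b)),
      Tendsto (fun A => ⨍ y in A, ‖G y - G x‖) (v.filterAt x) (𝓝 0) := ae_restrict_of_ae hLp
  have hne : ∀ c : ℝ, ∀ᵐ x : ℝ ∂volume, x ≠ c := by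
    intro c
    rw [ae_iff]
    have : {x : ℝ | ¬ x ≠ c} = {c} := by ext y; simp
    rw [this]; exact measure_singleton c
  have h2 : ∀ᵐ x ∂(volume.restrict (Icc a b)), x ∈ Ioo a b := by
    filter_upwards [ae_restrict_mem measurableSet_Icc,
      ae_restrict_of_ae (hne a), ae_restrict_of_ae (hne b)] with x hx hxa hxb
    exact ⟨lt_of_le_of_ne hx.1 (Ne.symm hxa), lt_of_le_of_ne hx.2 hxb⟩
  filter_upwards [h1, h2] with x hx hxI
  have hab : a < b := hxI.1.trans hxI.2
  set Ψ : ℝ → ℝ := fun t => ∫ s in a..t, g s with hΨ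
  have hii : ∀ u w : ℝ, a ≤ u → u ≤ b → a ≤ w → w ≤ b → IntervalIntegrable g volume u w := by
    intro u w hu1 hu2 hw1 hw2
    rw [intervalIntegrable_iff]
    refine hg.mono_set (fun t ht => ?_)
    exact ⟨(le_min hu1 hw1).trans ht.1.le, ht.2.trans (max_le hu2 hw2)⟩
  -- the key computation : for u < v both in [a,b], Ψ v - Ψ u = ∫ t in Icc u v, G t
  have hkey : ∀ u w : ℝ, a ≤ u → u < w → w ≤ b →
      Ψ w - Ψ u = ∫ t in Icc u w, G t := by
    intro u w hu huw hw
    have h3 : Ψ w - Ψ u = ∫ s in u..w, g s :=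
      integral_interval_sub_left (hii a w le_rfl hab.le (hu.trans huw.le) hw)
        (hii a u le_rfl hab.le hu (huw.le.trans hw))
    rw [h3, intervalIntegral.integral_of_le huw.le]
    rw [show (∫ s in Ioc u w, g s) = ∫ s in Ioc u w, G s from
      setIntegral_congr_fun measurableSet_Ioc (fun t ht =>
        (indicator_of_mem (Set.mem_Icc.mpr ⟨hu.trans ht.1.le, ht.2.trans hw⟩) g).symm)]
    exact setIntegral_congr_set Ioc_ae_eq_Icc
  have hGx : G x = g x := indicator_of_mem (Set.mem_Icc.mpr ⟨hxI.1.le, hxI.2.le⟩) g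
  rw [hasDerivAt_iff_tendsto_slope, ← nhdsLT_sup_nhdsGT, tendsto_sup]
  constructor
  · -- left limit
    have hav : Tendsto (fun y => ⨍ t in Icc y x, ‖G t - G x‖) (𝓝[<] x) (𝓝 0) :=
      hx.comp (Real.tendsto_Icc_vitaliFamily_left x)
    rw [tendsto_iff_norm_sub_tendsto_zero]
    refine squeeze_zero' (Eventually.of_forall fun _ => norm_nonneg _) ?_ hav
    filter_upwards [Ioo_mem_nhdsLT_of_mem (Set.mem_Ioc.mpr ⟨hxI.1, le_refl x⟩)] with y hy
    have hyx : y < x := hy.2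
    have hslope : slope Ψ x y = (∫ t in Icc y x, G t) / (x - y) := by
      rw [slope_def_field, show Ψ y - Ψ x = -(Ψ x - Ψ y) by ring,
        show y - x = -(x - y) by ring, neg_div_neg_eq, hkey y x hy.1.le hyx hxI.2.le]
    rw [hslope, ← hGx]
    exact avg_bound G hGint y x hyx (G x)
  · -- right limit
    have hav : Tendsto (fun y => ⨍ t in Icc x y, ‖G t - G x‖) (𝓝[>] x) (𝓝 0) :=
      hx.comp (Real.tendsto_Icc_vitaliFamily_right x)
    rw [tendsto_iff_norm_sub_tendsto_zero]
    refine squeeze_zero' (Eventually.of_forall fun _ => norm_nonneg _) ?_ hav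
    filter_upwards [Ioo_mem_nhdsGT_of_mem (Set.mem_Ico.mpr ⟨le_refl x, hxI.2⟩)] with y hy
    have hxy : x < y := hy.1
    have hslope : slope Ψ x y = (∫ t in Icc x y, G t) / (y - x) := by
      rw [slope_def_field, hkey x y hxI.1.le hxy hy.2.le]
    rw [hslope, ← hGx]
    exact avg_bound G hGint x y hxy (G x)

/-- if `k` and `k'` are conjugate and `f = I_a^k φ` a.e. with `φ ∈ L¹([a,b])`,
then `I_a^{k'} f` agrees a.e. with the absolutely continuous function
`Ψ(x) = ∫_a^x φ(y) ω(y) dy`, the `k'`-derivative `D_a^{k'} f = (1/ω) Ψ'` equals `φ` a.e.,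
and consequently `I_a^k (D_a^{k'} f) = f` a.e. on `[a,b]`. -/
theorem stmt10 (a b : ℝ) (hab : a < b) (ω : ℝ → ℝ) (hω : IsWeight a b ω)
    (k k' : ℝ → ℝ → ℝ) (hk : MemK a b ω k) (hk' : MemK a b ω k')
    (hconj : Conjugate a b ω k k')
    (f φ : ℝ → ℝ) (hf : IntegrableOn f (Icc a b)) (hφ : IntegrableOn φ (Icc a b))
    (hrep : ∀ᵐ x ∂(volume.restrict (Icc a b)), f x = Ia a ω k φ x) :
    (∀ᵐ x ∂(volume.restrict (Icc a b)),
      Ia a ω k' f x = ∫ y in a..x, φ y * ω y) ∧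
    (∀ᵐ x ∂(volume.restrict (Icc a b)),
      DifferentiableAt ℝ (fun t => ∫ y in a..t, φ y * ω y) x ∧
      (ω x)⁻¹ * deriv (fun t => ∫ y in a..t, φ y * ω y) x = φ x) ∧
    (∀ᵐ x ∂(volume.restrict (Icc a b)),
      Ia a ω k (fun y => (ω y)⁻¹ * deriv (fun t => ∫ s in a..t, φ s * ω s) y) x = f x) := by
  have hφω : IntegrableOn (fun z => φ z * ω z) (Icc a b) := mul_weight_integrable hω hφ
  have hftc := aeFTC hφω
  have part2 : ∀ᵐ x ∂(volume.restrict (Icc a b)),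
      DifferentiableAt ℝ (fun t => ∫ y in a..t, φ y * ω y) x ∧
      (ω x)⁻¹ * deriv (fun t => ∫ y in a..t, φ y * ω y) x = φ x := by
    filter_upwards [hftc, ae_restrict_mem measurableSet_Icc] with x hx hx2
    have hωx : ω x ≠ 0 := (hω.2.1 x hx2).ne'
    refine ⟨hx.differentiableAt, ?_⟩
    rw [hx.deriv]
    field_simp
  refine ⟨part1 a b hab ω hω k k' hk hk' hconj f φ hf hφ hrep, part2, ?_⟩
  have hD : ∀ᵐ y ∂(volume.restrict (Icc a b)),
      (ω y)⁻¹ * deriv (fun t => ∫ s in a..t, φ s * ω s) y = φ y := by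
    filter_upwards [part2] with y hy using hy.2
  filter_upwards [hrep, ae_restrict_mem measurableSet_Icc] with x hx1 hx2
  have hsub : Ioc a x ⊆ Icc a b := fun t ht => ⟨ht.1.le, ht.2.trans hx2.2⟩
  have hD' : ∀ᵐ y ∂(volume.restrict (Ioc a x)),
      (ω y)⁻¹ * deriv (fun t => ∫ s in a..t, φ s * ω s) y = φ y :=
    ae_restrict_of_ae_restrict_of_subset hsub hD
  rw [hx1, Ia, Ia, intervalIntegral.integral_of_le hx2.1, intervalIntegral.integral_of_le hx2.1]
  refine integral_congr_ae ?_
  filter_upwards [hD'] with y hy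
  rw [hy]


end
end

section
/- For every λ > 0, ∫_0^∞ e^{−λ t} F(t) dt = 1/ln(1+λ), where F(t) = (∫_0^∞ t^{s−1}/Γ(s) ds) · e^{−t} for t > 0. -/
open MeasureTheory Set

noncomputable section

/-- the exponential integral function `E₁(x) = ∫_x^∞ e^{−t}/t dt`. -/
def E1 (x : ℝ) : ℝ := ∫ t in Ioi x, Real.exp (-t) / t

/-- `F(t) = (∫_0^∞ t^{s−1}/Γ(s) ds) e^{−t}`. -/
def Ffun (t : ℝ) : ℝ := (∫ s in Ioi (0:ℝ), t ^ (s - 1) / Real.Gamma s) * Real.exp (-t)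

private lemma aux_integrable {s r : ℝ} (hs : 0 < s) (hr : 0 < r) :
    IntegrableOn (fun t : ℝ => t ^ (s - 1) * Real.exp (-(r * t))) (Ioi 0) := by
  have h : IntegrableOn (fun t : ℝ => Real.exp (-(r * t)) * (r * t) ^ (s - 1)) (Ioi 0) := by
    have := (integrableOn_Ioi_comp_mul_left_iff
      (fun x : ℝ => Real.exp (-x) * x ^ (s - 1)) 0 hr).2
    simpa [mul_zero] using this (by simpa [mul_zero] using Real.GammaIntegral_convergent hs)
  have h2 : IntegrableOn (fun t : ℝ => ((r : ℝ) ^ (s - 1))⁻¹ *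
      (Real.exp (-(r * t)) * (r * t) ^ (s - 1))) (Ioi 0) := h.const_mul _
  refine IntegrableOn.congr_fun h2 (fun t ht => ?_) measurableSet_Ioi
  have ht0 : (0:ℝ) < t := ht
  rw [Real.mul_rpow hr.le ht0.le]
  have hrp : (0:ℝ) < r ^ (s - 1) := Real.rpow_pos_of_pos hr _
  field_simp

private lemma aux_inner_val {s r : ℝ} (hs : 0 < s) (hr : 0 < r) :
    (∫ t in Ioi (0:ℝ), t ^ (s - 1) / Real.Gamma s * Real.exp (-(r * t))) =
      Real.exp (-(Real.log r * s)) := by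
  have hg : (0:ℝ) < Real.Gamma s := Real.Gamma_pos_of_pos hs
  have h1 : ∀ t : ℝ, t ^ (s - 1) / Real.Gamma s * Real.exp (-(r * t)) =
      (Real.Gamma s)⁻¹ * (t ^ (s - 1) * Real.exp (-(r * t))) := by
    intro t; rw [div_eq_inv_mul, mul_assoc]
  simp only [h1]
  rw [integral_const_mul, Real.integral_rpow_mul_exp_neg_mul_Ioi hs hr]
  rw [Real.rpow_def_of_pos (by positivity : (0:ℝ) < 1 / r)]
  rw [one_div, Real.log_inv]
  rw [neg_mul]
  field_simp

/-- the Laplace transform of `F`: `∫_0^∞ e^{−λt} F(t) dt = 1/ln(1+λ)`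
for every `λ > 0`. -/
theorem stmt14 (lam : ℝ) (hlam : 0 < lam) :
    (∫ t in Ioi (0:ℝ), Real.exp (-(lam * t)) * Ffun t) = 1 / Real.log (1 + lam) := by
  set r : ℝ := 1 + lam with hrdef
  have hr1 : 1 < r := by simp [hrdef]; linarith
  have hr0 : 0 < r := by linarith
  have hc : 0 < Real.log r := Real.log_pos hr1
  set f : ℝ → ℝ → ℝ := fun s t => t ^ (s - 1) / Real.Gamma s * Real.exp (-(r * t)) with hf
  -- measurability
  have hms : MeasurableSet (Ioi (0:ℝ) ×ˢ Ioi (0:ℝ)) :=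
    measurableSet_Ioi.prod measurableSet_Ioi
  have hcont : ContinuousOn (Function.uncurry f) (Ioi (0:ℝ) ×ˢ Ioi (0:ℝ)) := by
    intro p hp
    obtain ⟨hp1, hp2⟩ := hp
    apply ContinuousAt.continuousWithinAt
    have hG : ContinuousAt Real.Gamma p.1 := by
      refine (Real.differentiableAt_Gamma (fun m => ?_)).continuousAt
      have h0 : (0:ℝ) < p.1 := hp1
      have h1 : -(m:ℝ) ≤ 0 := neg_nonpos.mpr (Nat.cast_nonneg m)
      intro h; rw [h] at h0; linarith
    have hrpow : ContinuousAt (fun q : ℝ × ℝ => q.2 ^ (q.1 - 1)) p := by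
      have h := Real.continuousAt_rpow (p.2, p.1 - 1) (Or.inl (ne_of_gt hp2))
      have h2 : ContinuousAt (fun q : ℝ × ℝ => (q.2, q.1 - 1)) p :=
        (continuous_snd.prodMk (continuous_fst.sub continuous_const)).continuousAt
      show ContinuousAt ((fun z : ℝ × ℝ => z.1 ^ z.2) ∘ (fun q : ℝ × ℝ => (q.2, q.1 - 1))) p
      exact ContinuousAt.comp (f := fun q : ℝ × ℝ => (q.2, q.1 - 1)) h h2
    have hGpos : Real.Gamma p.1 ≠ 0 := (Real.Gamma_pos_of_pos hp1).ne'
    exact ((hrpow.div (hG.comp continuous_fst.continuousAt) hGpos).mul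
      (((continuous_const.mul continuous_snd).neg.rexp).continuousAt))
  have hmeas : AEStronglyMeasurable (Function.uncurry f)
      ((volume.restrict (Ioi (0:ℝ))).prod (volume.restrict (Ioi (0:ℝ)))) := by
    rw [Measure.prod_restrict]
    exact hcont.aestronglyMeasurable hms
  -- pointwise integrability in t for each positive s
  have hslice : ∀ s : ℝ, 0 < s → Integrable (f s) (volume.restrict (Ioi (0:ℝ))) := by
    intro s hs
    have h3 : IntegrableOn (fun t : ℝ => (Real.Gamma s)⁻¹ *
        (t ^ (s - 1) * Real.exp (-(r * t)))) (Ioi 0) := (aux_integrable hs hr0).const_mul _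
    refine IntegrableOn.congr_fun h3 (fun t _ => ?_) measurableSet_Ioi
    simp [hf, div_eq_inv_mul, mul_assoc]
  -- full integrability on the product
  have hint : Integrable (Function.uncurry f)
      ((volume.restrict (Ioi (0:ℝ))).prod (volume.restrict (Ioi (0:ℝ)))) := by
    rw [integrable_prod_iff hmeas]
    constructor
    · filter_upwards [ae_restrict_mem measurableSet_Ioi] with s hs
      exact hslice s hs
    · have heq : (fun s => ∫ t, ‖f s t‖ ∂(volume.restrict (Ioi (0:ℝ)))) =ᵐ[volume.restrict (Ioi (0:ℝ))]
          (fun s => Real.exp (-(Real.log r * s))) := by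
        filter_upwards [ae_restrict_mem measurableSet_Ioi] with s hs
        have hnn : ∀ t ∈ Ioi (0:ℝ), ‖f s t‖ = f s t := by
          intro t ht
          have ht0 : (0:ℝ) < t := ht
          have hg : (0:ℝ) < Real.Gamma s := Real.Gamma_pos_of_pos hs
          have : 0 ≤ f s t := by
            simp only [hf]
            positivity
          exact Real.norm_of_nonneg this
        calc (∫ t, ‖f s t‖ ∂(volume.restrict (Ioi (0:ℝ))))
            = ∫ t in Ioi (0:ℝ), f s t := setIntegral_congr_fun measurableSet_Ioi hnn
          _ = Real.exp (-(Real.log r * s)) := aux_inner_val hs hr0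
      refine (Integrable.congr ?_ heq.symm)
      have h4 := exp_neg_integrableOn_Ioi 0 hc
      refine IntegrableOn.congr_fun h4 (fun s _ => ?_) measurableSet_Ioi
      simp [neg_mul]
  -- LHS as iterated integral
  have hLHS : (∫ t in Ioi (0:ℝ), Real.exp (-(lam * t)) * Ffun t) =
      ∫ t in Ioi (0:ℝ), ∫ s in Ioi (0:ℝ), f s t := by
    refine setIntegral_congr_fun measurableSet_Ioi (fun t _ => ?_)
    have : (∫ s in Ioi (0:ℝ), f s t) =
        (∫ s in Ioi (0:ℝ), t ^ (s - 1) / Real.Gamma s) * Real.exp (-(r * t)) := by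
      simp only [hf]
      rw [integral_mul_const]
    rw [this, Ffun]
    rw [show -(r * t) = -(lam * t) + -t by rw [hrdef]; ring, Real.exp_add]
    ring
  rw [hLHS, ← integral_integral_swap hint]
  have hRHS : (∫ s in Ioi (0:ℝ), ∫ t in Ioi (0:ℝ), f s t) =
      ∫ s in Ioi (0:ℝ), Real.exp (-(Real.log r * s)) := by
    refine setIntegral_congr_fun measurableSet_Ioi (fun s hs => ?_)
    exact aux_inner_val hs hr0
  rw [hRHS]
  have := integral_comp_mul_left_Ioi (fun x => Real.exp (-x)) 0 hc
  simp only [mul_zero, integral_exp_neg_Ioi, neg_zero, Real.exp_zero, smul_eq_mul, mul_one] at this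
  rw [this, one_div]

end
end

section
/- Let f ∈ L¹([0,1];ℝ). Then ‖S_0^α f − f‖_{L¹([0,1])} → 0 as α → 0⁺; that is, lim_{α→0⁺} ∫_0^1 |(1/α) ∫_0^x E₁((x−y)/α) f(y) dy − f(x)| dx = 0. -/
open MeasureTheory Set

noncomputable section

/-- left-sided fractional integral of type (I): `(H_0^α f)(x) = ∫_0^x F((x−y)/α) f(y) dy`. -/
def H0 (α : ℝ) (f : ℝ → ℝ) (x : ℝ) : ℝ := ∫ y in (0:ℝ)..x, Ffun ((x - y) / α) * f y

/-- right-sided fractional integral of type (I): `(H_1^α f)(x) = ∫_x^1 F((y−x)/α) f(y) dy`. -/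
def H1 (α : ℝ) (f : ℝ → ℝ) (x : ℝ) : ℝ := ∫ y in x..(1:ℝ), Ffun ((y - x) / α) * f y

/-- left-sided fractional integral of type (II):
`(S_0^α f)(x) = (1/α) ∫_0^x E₁((x−y)/α) f(y) dy`. -/
def S0 (α : ℝ) (f : ℝ → ℝ) (x : ℝ) : ℝ := (1 / α) * ∫ y in (0:ℝ)..x, E1 ((x - y) / α) * f y

/-- right-sided fractional integral of type (II):
`(S_1^α f)(x) = (1/α) ∫_x^1 E₁((y−x)/α) f(y) dy`. -/
def S1 (α : ℝ) (f : ℝ → ℝ) (x : ℝ) : ℝ := (1 / α) * ∫ y in x..(1:ℝ), E1 ((y - x) / α) * f y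

open scoped Pointwise ENNReal

lemma E1_measurable : Measurable E1 := by
  have h : StronglyMeasurable fun p : ℝ × ℝ =>
      (Ioi p.1).indicator (fun t => Real.exp (-t) / t) p.2 := by
    have : (fun p : ℝ × ℝ => (Ioi p.1).indicator (fun t => Real.exp (-t) / t) p.2)
        = fun p : ℝ × ℝ => if p.1 < p.2 then Real.exp (-p.2) / p.2 else 0 := by
      ext p; simp [Set.indicator, mem_Ioi]
    rw [this]
    apply Measurable.stronglyMeasurable
    exact Measurable.ite (measurableSet_lt measurable_fst measurable_snd)
      ((Real.measurable_exp.comp measurable_snd.neg).div measurable_snd) measurable_const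
  have h2 : StronglyMeasurable fun x : ℝ =>
      ∫ t, (Ioi x).indicator (fun t => Real.exp (-t) / t) t ∂(volume : Measure ℝ) :=
    h.integral_prod_right'
  have heq : E1 = fun x => ∫ t, (Ioi x).indicator (fun t => Real.exp (-t) / t) t := by
    ext x; rw [E1, integral_indicator measurableSet_Ioi]
  rw [heq]
  exact h2.measurable

lemma E1_integrand_integrableOn {x : ℝ} (hx : 0 < x) :
    IntegrableOn (fun t => Real.exp (-t) / t) (Ioi x) := by
  have hbd : IntegrableOn (fun t => (1/x) * Real.exp (-1 * t)) (Ioi x) :=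
    (exp_neg_integrableOn_Ioi x one_pos).const_mul _
  refine Integrable.mono hbd ?_ ?_
  · exact (((Real.measurable_exp.comp measurable_neg).div measurable_id).aestronglyMeasurable).restrict
  · filter_upwards [ae_restrict_mem measurableSet_Ioi] with t ht
    have htpos : 0 < t := hx.trans ht
    rw [Real.norm_eq_abs, Real.norm_eq_abs, abs_of_nonneg (by positivity),
      abs_of_nonneg (by positivity)]
    rw [neg_one_mul, one_div, mul_comm, div_eq_mul_inv]
    gcongr
    exact ht.le

lemma E1_nonneg {x : ℝ} (hx : 0 < x) : 0 ≤ E1 x := by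
  refine setIntegral_nonneg measurableSet_Ioi fun t ht => ?_
  have : 0 < t := hx.trans ht
  positivity

lemma E1_ofReal_eq {x : ℝ} (hx : 0 < x) :
    ENNReal.ofReal (E1 x) = ∫⁻ t in Ioi x, ENNReal.ofReal (Real.exp (-t) / t) := by
  rw [E1]
  refine ofReal_integral_eq_lintegral_ofReal (E1_integrand_integrableOn hx) ?_
  filter_upwards [ae_restrict_mem measurableSet_Ioi] with t ht
  have : 0 < t := hx.trans ht
  positivity

lemma E1_lintegral_eq_one :
    ∫⁻ x in Ioi (0:ℝ), ENNReal.ofReal (E1 x) = 1 := by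
  set H : ℝ → ℝ≥0∞ := fun t => ENNReal.ofReal (Real.exp (-t) / t) with hH
  have hHm : Measurable H :=
    ((Real.measurable_exp.comp measurable_neg).div measurable_id).ennreal_ofReal
  have step1 : ∫⁻ x in Ioi (0:ℝ), ENNReal.ofReal (E1 x)
      = ∫⁻ x in Ioi (0:ℝ), ∫⁻ t, (Ioi x).indicator H t := by
    refine lintegral_congr_ae ?_
    filter_upwards [ae_restrict_mem measurableSet_Ioi] with x hx
    rw [E1_ofReal_eq hx, lintegral_indicator measurableSet_Ioi _]
  rw [step1]
  have hfm : AEMeasurable (fun p : ℝ × ℝ => (Ioi p.1).indicator H p.2)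
      ((volume.restrict (Ioi (0:ℝ))).prod volume) := by
    have : (fun p : ℝ × ℝ => (Ioi p.1).indicator H p.2)
        = fun p : ℝ × ℝ => if p.1 < p.2 then H p.2 else 0 := by
      ext p; simp [Set.indicator, mem_Ioi]
    rw [this]
    exact (Measurable.ite (measurableSet_lt measurable_fst measurable_snd)
      (hHm.comp measurable_snd) measurable_const).aemeasurable
  have step2 : ∫⁻ x in Ioi (0:ℝ), ∫⁻ t, (Ioi x).indicator H t
      = ∫⁻ t, ∫⁻ x in Ioi (0:ℝ), (Ioi x).indicator H t := by
    exact lintegral_lintegral_swap hfm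
  rw [step2]
  have step3 : ∀ t : ℝ, ∫⁻ x in Ioi (0:ℝ), (Ioi x).indicator H t
      = (Ioi (0:ℝ)).indicator (fun t => ENNReal.ofReal (Real.exp (-t))) t := by
    intro t
    have : ∀ x : ℝ, (Ioi x).indicator H t = (Iio t).indicator (fun _ => H t) x := by
      intro x; simp [Set.indicator, mem_Ioi, mem_Iio]
    simp_rw [this]
    rw [lintegral_indicator measurableSet_Iio _]
    rw [setLIntegral_const]
    rw [Measure.restrict_apply measurableSet_Iio]
    have : Iio t ∩ Ioi (0:ℝ) = Ioo 0 t := by ext y; simp [mem_Iio, mem_Ioi, mem_Ioo, and_comm]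
    rw [this, Real.volume_Ioo]
    by_cases ht : 0 < t
    · rw [Set.indicator_of_mem (mem_Ioi.mpr ht)]
      rw [hH]
      rw [← ENNReal.ofReal_mul (by positivity)]
      rw [sub_zero, div_mul_cancel₀ _ (ne_of_gt ht)]
    · rw [Set.indicator_of_notMem (by simpa [mem_Ioi] using ht)]
      have : t - 0 ≤ 0 := by push_neg at ht; linarith
      rw [ENNReal.ofReal_of_nonpos this, mul_zero]
  simp_rw [step3]
  rw [lintegral_indicator measurableSet_Ioi _]
  have hint : IntegrableOn (fun t => Real.exp (-t)) (Ioi (0:ℝ)) := by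
    have := exp_neg_integrableOn_Ioi (0:ℝ) one_pos
    simpa [neg_one_mul] using this
  rw [← ofReal_integral_eq_lintegral_ofReal hint
    (Filter.Eventually.of_forall fun t => (Real.exp_pos _).le)]
  rw [integral_exp_neg_Ioi_zero, ENNReal.ofReal_one]

lemma E1_integrableOn : IntegrableOn E1 (Ioi (0:ℝ)) := by
  constructor
  · exact E1_measurable.aestronglyMeasurable.restrict
  · rw [hasFiniteIntegral_iff_norm]
    have : ∫⁻ a in Ioi (0:ℝ), ENNReal.ofReal ‖E1 a‖ = 1 := by
      rw [← E1_lintegral_eq_one]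
      refine lintegral_congr_ae ?_
      filter_upwards [ae_restrict_mem measurableSet_Ioi] with x hx
      rw [Real.norm_eq_abs, abs_of_nonneg (E1_nonneg hx)]
    rw [this]; exact ENNReal.one_lt_top

lemma E1_integral_eq_one : ∫ x in Ioi (0:ℝ), E1 x = 1 := by
  rw [integral_eq_lintegral_of_nonneg_ae ?_ E1_measurable.aestronglyMeasurable.restrict]
  · rw [E1_lintegral_eq_one]; simp
  · filter_upwards [ae_restrict_mem measurableSet_Ioi] with x hx using E1_nonneg hx

def S0' (α : ℝ) (f : ℝ → ℝ) (x : ℝ) : ℝ := (1 / α) * ∫ y in (0:ℝ)..x, E1 ((x - y) / α) * f y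

lemma S0'_eq_integral (c : ℝ → ℝ) (hc0 : ∀ y, y ∉ Icc (0:ℝ) 1 → c y = 0)
    {α x : ℝ} (hα : 0 < α) (hx0 : 0 < x) :
    S0' α c x = ∫ t in Ioi (0:ℝ), E1 t * c (x - α * t) := by
  set ψ : ℝ → ℝ := fun y => E1 ((x - y) / α) * c y with hψ
  have key : ∫ t in (0:ℝ)..(x/α), E1 t * c (x - α * t) = (1/α) * ∫ y in (0:ℝ)..x, ψ y := by
    have h1 : ∀ t : ℝ, E1 t * c (x - α * t) = (fun u => ψ (x - u)) (α * t) := by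
      intro t
      have h2 : (x - (x - α * t)) / α = t := by field_simp; ring
      simp only [ψ, h2]
    simp_rw [h1]
    rw [intervalIntegral.integral_comp_mul_left (fun u => ψ (x - u)) (ne_of_gt hα)]
    rw [mul_zero, mul_div_cancel₀ _ (ne_of_gt hα)]
    rw [intervalIntegral.integral_comp_sub_left ψ x]
    rw [sub_self, sub_zero, smul_eq_mul, one_div]
  rw [S0', ← key]
  have hle : (0:ℝ) ≤ x / α := le_of_lt (div_pos hx0 hα)
  rw [intervalIntegral.integral_of_le hle]
  have hind : ∀ t ∈ Ioi (0:ℝ),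
      E1 t * c (x - α * t) = (Ioc (0:ℝ) (x/α)).indicator (fun t => E1 t * c (x - α * t)) t := by
    intro t ht
    by_cases h : t ≤ x / α
    · rw [Set.indicator_of_mem (mem_Ioc.mpr ⟨mem_Ioi.mp ht, h⟩)]
    · rw [Set.indicator_of_notMem (fun hmem => h hmem.2)]
      push_neg at h
      have : x - α * t < 0 := by
        have := (div_lt_iff₀ hα).mp h
        linarith [this]
      rw [hc0 (x - α * t) (fun hmem => by exact absurd hmem.1 (not_le.mpr this)), mul_zero]
  rw [setIntegral_congr_fun measurableSet_Ioi hind]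
  rw [setIntegral_indicator measurableSet_Ioc]
  congr 1
  rw [Set.inter_eq_right.mpr Ioc_subset_Ioi_self]

lemma translation_small (c : ℝ → ℝ) (hc : Integrable c) (hcm : Measurable c)
    {r : ℝ} (hr : 0 < r) :
    ∃ δ > (0:ℝ), ∀ s : ℝ, |s| < δ →
      ∫⁻ x : ℝ, ENNReal.ofReal |c (x - s) - c x| ≤ ENNReal.ofReal r := by
  obtain ⟨h, hsupp, hle, hcont, _⟩ :=
    hc.exists_hasCompactSupport_lintegral_sub_le
      (ε := ENNReal.ofReal (r/4)) (by simp [ENNReal.ofReal_eq_zero]; linarith)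
  have hnn : ∀ a b : ℝ, ENNReal.ofReal |a - b| = (‖a - b‖₊ : ℝ≥0∞) := by
    intro a b; rw [← Real.norm_eq_abs]; exact ofReal_norm _
  -- compact set K₁
  set K₁ : Set ℝ := tsupport h + Icc (-1:ℝ) 1 with hK₁
  have hK₁c : IsCompact K₁ := IsCompact.add hsupp isCompact_Icc
  have hK₁meas : MeasurableSet K₁ := hK₁c.isClosed.measurableSet
  have hKsub : tsupport h ⊆ K₁ := by
    intro y hy
    exact ⟨y, hy, 0, by norm_num, by simp⟩
  set V : ℝ := (volume K₁).toReal with hV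
  have hVnn : 0 ≤ V := ENNReal.toReal_nonneg
  set r' : ℝ := (r/4) / (V + 1) with hr'
  have hr'pos : 0 < r' := by positivity
  have hu : UniformContinuous h := hsupp.uniformContinuous_of_continuous hcont
  obtain ⟨δ', hδ'pos, hδ'⟩ := Metric.uniformContinuous_iff.mp hu r' hr'pos
  refine ⟨min δ' 1, lt_min hδ'pos one_pos, fun s hs => ?_⟩
  have hs1 : |s| < δ' := lt_of_lt_of_le hs (min_le_left _ _)
  have hs2 : |s| ≤ 1 := le_of_lt (lt_of_lt_of_le hs (min_le_right _ _))
  -- translation-term bound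
  have T2 : ∫⁻ x : ℝ, ENNReal.ofReal |h (x - s) - h x| ≤ ENNReal.ofReal (r/4) := by
    have hpt : ∀ x : ℝ, ENNReal.ofReal |h (x - s) - h x|
        ≤ K₁.indicator (fun _ => ENNReal.ofReal r') x := by
      intro x
      by_cases hx : x ∈ K₁
      · rw [Set.indicator_of_mem hx]
        refine ENNReal.ofReal_le_ofReal ?_
        have : dist (x - s) x < δ' := by
          rw [Real.dist_eq]
          simpa [abs_neg] using hs1
        have := hδ' this
        rw [Real.dist_eq] at this
        exact this.le
      · rw [Set.indicator_of_notMem hx]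
        have hx1 : h x = 0 := image_eq_zero_of_notMem_tsupport (fun hmem => hx (hKsub hmem))
        have hx2 : h (x - s) = 0 := by
          refine image_eq_zero_of_notMem_tsupport (fun hmem => hx ?_)
          exact ⟨x - s, hmem, s, by rwa [mem_Icc, ← abs_le], by ring⟩
        simp [hx1, hx2]
    calc ∫⁻ x : ℝ, ENNReal.ofReal |h (x - s) - h x|
        ≤ ∫⁻ x : ℝ, K₁.indicator (fun _ => ENNReal.ofReal r') x := lintegral_mono hpt
      _ = ENNReal.ofReal r' * volume K₁ := lintegral_indicator_const hK₁meas _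
      _ = ENNReal.ofReal r' * ENNReal.ofReal V := by
          rw [hV, ENNReal.ofReal_toReal hK₁c.measure_lt_top.ne]
      _ = ENNReal.ofReal (r' * V) := (ENNReal.ofReal_mul hr'pos.le).symm
      _ ≤ ENNReal.ofReal (r/4) := by
          refine ENNReal.ofReal_le_ofReal ?_
          rw [hr']
          rw [div_mul_eq_mul_div, div_le_iff₀ (by positivity)]
          nlinarith [hVnn, hr.le]
  -- approximation terms
  have T1 : ∫⁻ x : ℝ, ENNReal.ofReal |c (x - s) - h (x - s)| ≤ ENNReal.ofReal (r/4) := by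
    have hmp := measurePreserving_sub_right (volume : Measure ℝ) s
    have hmeas : Measurable fun x : ℝ => ENNReal.ofReal |c x - h x| :=
      ((hcm.sub hcont.measurable).abs).ennreal_ofReal
    calc ∫⁻ x : ℝ, ENNReal.ofReal |c (x - s) - h (x - s)|
        = ∫⁻ x : ℝ, ENNReal.ofReal |c x - h x| := hmp.lintegral_comp hmeas
      _ ≤ ENNReal.ofReal (r/4) := by
          refine le_trans (le_of_eq ?_) hle
          exact lintegral_congr fun x => hnn _ _
  have T3 : ∫⁻ x : ℝ, ENNReal.ofReal |h x - c x| ≤ ENNReal.ofReal (r/4) := by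
    refine le_trans (le_of_eq ?_) hle
    refine lintegral_congr fun x => ?_
    rw [abs_sub_comm]
    exact hnn _ _
  -- combine
  have hsplit : ∀ x : ℝ, ENNReal.ofReal |c (x - s) - c x|
      ≤ ENNReal.ofReal |c (x - s) - h (x - s)| + ENNReal.ofReal |h (x - s) - h x|
        + ENNReal.ofReal |h x - c x| := by
    intro x
    rw [← ENNReal.ofReal_add (abs_nonneg _) (abs_nonneg _),
      ← ENNReal.ofReal_add (by positivity) (abs_nonneg _)]
    refine ENNReal.ofReal_le_ofReal ?_
    calc |c (x - s) - c x| ≤ |c (x - s) - h (x - s)| + |h (x - s) - c x| := abs_sub_le _ _ _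
      _ ≤ |c (x - s) - h (x - s)| + (|h (x - s) - h x| + |h x - c x|) := by
          gcongr
          exact abs_sub_le _ _ _
      _ = _ := by ring
  have hm1 : Measurable fun x : ℝ => ENNReal.ofReal |c (x - s) - h (x - s)| :=
    (((hcm.comp (measurable_id.sub measurable_const)).sub
      (hcont.measurable.comp (measurable_id.sub measurable_const))).abs).ennreal_ofReal
  have hm2 : Measurable fun x : ℝ => ENNReal.ofReal |h (x - s) - h x| :=
    (((hcont.measurable.comp (measurable_id.sub measurable_const)).sub
      hcont.measurable).abs).ennreal_ofReal
  calc ∫⁻ x : ℝ, ENNReal.ofReal |c (x - s) - c x|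
      ≤ ∫⁻ x : ℝ, (ENNReal.ofReal |c (x - s) - h (x - s)| + ENNReal.ofReal |h (x - s) - h x|
        + ENNReal.ofReal |h x - c x|) := lintegral_mono hsplit
    _ = (∫⁻ x : ℝ, ENNReal.ofReal |c (x - s) - h (x - s)|)
        + (∫⁻ x : ℝ, ENNReal.ofReal |h (x - s) - h x|)
        + ∫⁻ x : ℝ, ENNReal.ofReal |h x - c x| := by
        rw [lintegral_add_left (by exact hm1.add hm2 : Measurable fun x => ENNReal.ofReal |c (x - s) - h (x - s)| + ENNReal.ofReal |h (x - s) - h x|), lintegral_add_left hm1]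
    _ ≤ ENNReal.ofReal (r/4) + ENNReal.ofReal (r/4) + ENNReal.ofReal (r/4) := by
        gcongr
    _ ≤ ENNReal.ofReal r := by
        rw [← ENNReal.ofReal_add (by positivity) (by positivity),
          ← ENNReal.ofReal_add (by positivity) (by positivity)]
        refine ENNReal.ofReal_le_ofReal ?_
        linarith

lemma ofReal_D_le (f c : ℝ → ℝ) (hc : Integrable c) (hcm : Measurable c)
    (hc0 : ∀ y, y ∉ Icc (0:ℝ) 1 → c y = 0)
    (hfc : ∀ᵐ y ∂(volume : Measure ℝ), y ∈ Icc (0:ℝ) 1 → f y = c y)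
    {α : ℝ} (hα : 0 < α) :
    ENNReal.ofReal (∫ x in (0:ℝ)..1, |S0' α f x - f x|)
      ≤ ∫⁻ t in Ioi (0:ℝ), ENNReal.ofReal (E1 t)
          * ∫⁻ x : ℝ, ENNReal.ofReal |c (x - α * t) - c x| := by
  set Λ : ℝ → ℝ≥0∞ := fun x => ∫⁻ t in Ioi (0:ℝ),
    ENNReal.ofReal (E1 t * |c (x - α * t) - c x|) with hΛ
  -- pointwise a.e. bound
  have claim1 : ∀ᵐ x ∂(volume.restrict (Ioc (0:ℝ) 1)),
      ENNReal.ofReal |S0' α f x - f x| ≤ Λ x := by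
    filter_upwards [ae_restrict_mem measurableSet_Ioc, ae_restrict_of_ae hfc] with x hx hfcx
    have hx01 : x ∈ Icc (0:ℝ) 1 := ⟨hx.1.le, hx.2⟩
    have hfx : f x = c x := hfcx hx01
    have hS : S0' α f x = ∫ t in Ioi (0:ℝ), E1 t * c (x - α * t) := by
      have h1 : S0' α f x = S0' α c x := by
        rw [S0', S0']
        congr 1
        refine intervalIntegral.integral_congr_ae ?_
        filter_upwards [hfc] with y hy hymem
        rw [Set.uIoc_of_le hx.1.le] at hymem
        rw [hy ⟨hymem.1.le, hymem.2.trans hx.2⟩]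
      rw [h1, S0'_eq_integral c hc0 hα hx.1]
    by_cases hint : IntegrableOn (fun t => E1 t * c (x - α * t)) (Ioi (0:ℝ))
    · have hint2 : IntegrableOn (fun t => E1 t * c x) (Ioi (0:ℝ)) :=
        E1_integrableOn.mul_const _
      have hcx : ∫ t in Ioi (0:ℝ), E1 t * c x = c x := by
        rw [integral_mul_const, E1_integral_eq_one, one_mul]
      have hsub : S0' α f x - f x
          = ∫ t in Ioi (0:ℝ), (E1 t * c (x - α * t) - E1 t * c x) := by
        rw [hS, hfx, integral_sub hint hint2, hcx]
      have habs : |S0' α f x - f x|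
          ≤ ∫ t in Ioi (0:ℝ), |E1 t * c (x - α * t) - E1 t * c x| := by
        rw [hsub]
        simpa [Real.norm_eq_abs] using
          norm_integral_le_integral_norm (fun t => E1 t * c (x - α * t) - E1 t * c x)
            (μ := volume.restrict (Ioi (0:ℝ)))
      calc ENNReal.ofReal |S0' α f x - f x|
          ≤ ENNReal.ofReal (∫ t in Ioi (0:ℝ), |E1 t * c (x - α * t) - E1 t * c x|) :=
            ENNReal.ofReal_le_ofReal habs
        _ = ∫⁻ t in Ioi (0:ℝ), ENNReal.ofReal |E1 t * c (x - α * t) - E1 t * c x| := by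
            refine ofReal_integral_eq_lintegral_ofReal ?_ ?_
            · have := (hint.sub hint2).norm
              simpa [Real.norm_eq_abs] using this
            · exact Filter.Eventually.of_forall fun t => abs_nonneg _
        _ ≤ Λ x := by
            rw [hΛ]
            refine lintegral_mono_ae ?_
            filter_upwards [ae_restrict_mem measurableSet_Ioi] with t ht
            rw [← mul_sub, abs_mul, abs_of_nonneg (E1_nonneg ht)]
    · -- non-integrable case : Λ x = ⊤
      have hmeas_t : Measurable fun t => E1 t * c (x - α * t) :=
        E1_measurable.mul (hcm.comp (measurable_const.sub (measurable_id.const_mul α)))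
      have htop : ∫⁻ t in Ioi (0:ℝ), ENNReal.ofReal (E1 t * |c (x - α * t)|) = ⊤ := by
        have hnint : ¬ HasFiniteIntegral (fun t => E1 t * c (x - α * t))
            (volume.restrict (Ioi (0:ℝ))) := by
          intro hfin
          exact hint ⟨hmeas_t.aestronglyMeasurable, hfin⟩
        rw [hasFiniteIntegral_iff_norm, not_lt, top_le_iff] at hnint
        rw [← hnint]
        refine lintegral_congr_ae ?_
        filter_upwards [ae_restrict_mem measurableSet_Ioi] with t ht
        rw [Real.norm_eq_abs, abs_mul, abs_of_nonneg (E1_nonneg ht)]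
      have hfin2 : ∫⁻ t in Ioi (0:ℝ), ENNReal.ofReal (E1 t * |c x|) ≠ ⊤ := by
        have heq : ∫⁻ t in Ioi (0:ℝ), ENNReal.ofReal (E1 t * |c x|)
            = (∫⁻ t in Ioi (0:ℝ), ENNReal.ofReal (E1 t)) * ENNReal.ofReal |c x| := by
          rw [← lintegral_mul_const _ E1_measurable.ennreal_ofReal]
          refine lintegral_congr_ae ?_
          filter_upwards [ae_restrict_mem measurableSet_Ioi] with t ht
          rw [ENNReal.ofReal_mul (E1_nonneg ht)]
        rw [heq, E1_lintegral_eq_one, one_mul]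
        exact ENNReal.ofReal_ne_top
      have hΛtop : Λ x = ⊤ := by
        by_contra hne
        have hle : ∫⁻ t in Ioi (0:ℝ), ENNReal.ofReal (E1 t * |c (x - α * t)|)
            ≤ Λ x + ∫⁻ t in Ioi (0:ℝ), ENNReal.ofReal (E1 t * |c x|) := by
          rw [hΛ, ← lintegral_add_left']
          · refine lintegral_mono_ae ?_
            filter_upwards [ae_restrict_mem measurableSet_Ioi] with t ht
            rw [← ENNReal.ofReal_add (mul_nonneg (E1_nonneg ht) (abs_nonneg _))
              (mul_nonneg (E1_nonneg ht) (abs_nonneg _))]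
            refine ENNReal.ofReal_le_ofReal ?_
            rw [← mul_add]
            refine mul_le_mul_of_nonneg_left ?_ (E1_nonneg ht)
            calc |c (x - α * t)| = |c (x - α * t) - c x + c x| := by ring_nf
              _ ≤ |c (x - α * t) - c x| + |c x| := abs_add_le _ _
          · exact (E1_measurable.mul ((hcm.comp
              (measurable_const.sub (measurable_id.const_mul α))).sub
              measurable_const).abs).ennreal_ofReal.aemeasurable
        rw [htop, top_le_iff] at hle
        exact (ENNReal.add_ne_top.mpr ⟨hne, hfin2⟩) hle
      rw [hΛtop]
      exact le_top
  -- reduce to Λ on the set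
  have claim2 : ENNReal.ofReal (∫ x in (0:ℝ)..1, |S0' α f x - f x|)
      ≤ ∫⁻ x in Ioc (0:ℝ) 1, Λ x := by
    rw [intervalIntegral.integral_of_le zero_le_one]
    by_cases hD : IntegrableOn (fun x => |S0' α f x - f x|) (Ioc (0:ℝ) 1)
    · rw [ofReal_integral_eq_lintegral_ofReal hD
        (Filter.Eventually.of_forall fun x => abs_nonneg _)]
      exact lintegral_mono_ae claim1
    · rw [integral_undef hD, ENNReal.ofReal_zero]
      exact zero_le
  refine claim2.trans ?_
  refine le_trans (setLIntegral_le_lintegral _ _) ?_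
  -- Tonelli swap
  have hswap : ∫⁻ x : ℝ, Λ x
      = ∫⁻ t in Ioi (0:ℝ), ∫⁻ x : ℝ, ENNReal.ofReal (E1 t * |c (x - α * t) - c x|) := by
    refine lintegral_lintegral_swap ?_
    refine Measurable.aemeasurable ?_
    have : Measurable fun p : ℝ × ℝ => E1 p.2 * |c (p.1 - α * p.2) - c p.1| := by
      refine (E1_measurable.comp measurable_snd).mul ?_
      exact ((hcm.comp (measurable_fst.sub (measurable_snd.const_mul α))).sub
        (hcm.comp measurable_fst)).abs
    exact this.ennreal_ofReal
  rw [hswap]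
  refine lintegral_mono_ae ?_
  filter_upwards [ae_restrict_mem measurableSet_Ioi] with t ht
  have hmx : Measurable fun x : ℝ => ENNReal.ofReal |c (x - α * t) - c x| :=
    (((hcm.comp (measurable_id.sub measurable_const)).sub hcm).abs).ennreal_ofReal
  rw [← lintegral_const_mul _ hmx]
  refine le_of_eq (lintegral_congr fun x => ?_)
  rw [ENNReal.ofReal_mul (E1_nonneg ht)]

theorem stmt17' (f : ℝ → ℝ) (hf : IntegrableOn f (Icc (0:ℝ) 1)) :
    Filter.Tendsto (fun α : ℝ => ∫ x in (0:ℝ)..1, |S0' α f x - f x|)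
      (nhdsWithin 0 (Ioi 0)) (nhds 0) := by
  -- measurable compactly supported representative
  set g : ℝ → ℝ := (Icc (0:ℝ) 1).indicator f with hg_def
  have hg : Integrable g := (integrable_indicator_iff measurableSet_Icc).2 hf
  set m : ℝ → ℝ := hg.1.mk g with hm_def
  set c : ℝ → ℝ := (Icc (0:ℝ) 1).indicator m with hc_def
  have hcm : Measurable c :=
    (hg.1.stronglyMeasurable_mk.measurable).indicator measurableSet_Icc
  have hceq : c =ᵐ[volume] g := by
    filter_upwards [hg.1.ae_eq_mk] with x hx
    by_cases hmem : x ∈ Icc (0:ℝ) 1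
    · rw [hc_def, Set.indicator_of_mem hmem]
      exact hx.symm
    · rw [hc_def, Set.indicator_of_notMem hmem, hg_def, Set.indicator_of_notMem hmem]
  have hc : Integrable c := hg.congr hceq.symm
  have hc0 : ∀ y, y ∉ Icc (0:ℝ) 1 → c y = 0 := fun y hy => Set.indicator_of_notMem hy _
  have hfc : ∀ᵐ y ∂(volume : Measure ℝ), y ∈ Icc (0:ℝ) 1 → f y = c y := by
    filter_upwards [hceq] with y hy hmem
    rw [hy, hg_def, Set.indicator_of_mem hmem]
  -- the modulus W and its properties
  set W : ℝ → ℝ≥0∞ := fun s => ∫⁻ x : ℝ, ENNReal.ofReal |c (x - s) - c x| with hW_def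
  set C : ℝ≥0∞ := ∫⁻ x : ℝ, ENNReal.ofReal |c x| with hC_def
  have hCne : C ≠ ⊤ := by
    have : C = ∫⁻ x : ℝ, (‖c x‖₊ : ℝ≥0∞) := by
      refine lintegral_congr fun x => ?_
      rw [← Real.norm_eq_abs]; exact ofReal_norm _
    rw [this]
    exact hc.2.ne
  have hW2C : ∀ s : ℝ, W s ≤ C + C := by
    intro s
    have hm1 : Measurable fun x : ℝ => ENNReal.ofReal |c (x - s)| :=
      ((hcm.comp (measurable_id.sub measurable_const)).abs).ennreal_ofReal
    calc W s ≤ ∫⁻ x : ℝ, (ENNReal.ofReal |c (x - s)| + ENNReal.ofReal |c x|) := by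
          refine lintegral_mono fun x => ?_
          rw [← ENNReal.ofReal_add (abs_nonneg _) (abs_nonneg _)]
          exact ENNReal.ofReal_le_ofReal (abs_sub _ _)
      _ = (∫⁻ x : ℝ, ENNReal.ofReal |c (x - s)|) + C := lintegral_add_left hm1 _
      _ = C + C := by
          congr 1
          exact (measurePreserving_sub_right (volume : Measure ℝ) s).lintegral_comp
            ((hcm.abs).ennreal_ofReal)
  -- the dominating quantity A
  set A : ℝ → ℝ≥0∞ := fun α => ∫⁻ t in Ioi (0:ℝ), ENNReal.ofReal (E1 t) * W (α * t)
    with hA_def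
  have hA_le : ∀ α : ℝ, A α ≤ C + C := by
    intro α
    calc A α ≤ ∫⁻ t in Ioi (0:ℝ), ENNReal.ofReal (E1 t) * (C + C) :=
          lintegral_mono fun t => mul_le_mul_right (hW2C _) _
      _ = (∫⁻ t in Ioi (0:ℝ), ENNReal.ofReal (E1 t)) * (C + C) :=
          lintegral_mul_const _ E1_measurable.ennreal_ofReal
      _ = C + C := by rw [E1_lintegral_eq_one, one_mul]
  have hAne : ∀ α : ℝ, A α ≠ ⊤ :=
    fun α => ne_top_of_le_ne_top (ENNReal.add_ne_top.mpr ⟨hCne, hCne⟩) (hA_le α)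
  have hkey : ∀ α : ℝ, 0 < α →
      ENNReal.ofReal (∫ x in (0:ℝ)..1, |S0' α f x - f x|) ≤ A α :=
    fun α hα => ofReal_D_le f c hc hcm hc0 hfc hα
  -- A tends to 0
  have hA_tendsto : Filter.Tendsto A (nhdsWithin 0 (Ioi 0)) (nhds 0) := by
    rw [ENNReal.tendsto_nhds_zero]
    intro ε hε
    -- choose a real r with ofReal r ≤ ε
    obtain ⟨r, hr, hrε⟩ : ∃ r : ℝ, 0 < r ∧ ENNReal.ofReal r ≤ ε := by
      by_cases htop : ε = ⊤
      · exact ⟨1, one_pos, by simp [htop]⟩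
      · exact ⟨ε.toReal, ENNReal.toReal_pos hε.ne' htop,
          le_of_eq (ENNReal.ofReal_toReal htop)⟩
    -- tail cutoff
    set ν : Measure ℝ := (volume.restrict (Ioi (0:ℝ))).withDensity
      (fun t => ENNReal.ofReal (E1 t)) with hν_def
    have hν_apply : ∀ R : ℝ, 0 ≤ R → ν (Ioi R) = ∫⁻ t in Ioi R, ENNReal.ofReal (E1 t) := by
      intro R hR
      rw [hν_def, withDensity_apply _ measurableSet_Ioi,
        Measure.restrict_restrict measurableSet_Ioi,
        Set.inter_eq_left.mpr (Ioi_subset_Ioi hR)]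
    set η : ℝ≥0∞ := ENNReal.ofReal (r/2) / (C + C + 1) with hη_def
    have hηpos : 0 < η := by
      rw [hη_def]
      refine ENNReal.div_pos ?_ ?_
      · simp only [ne_eq, ENNReal.ofReal_eq_zero, not_le]; linarith
      · exact ENNReal.add_ne_top.mpr ⟨ENNReal.add_ne_top.mpr ⟨hCne, hCne⟩, ENNReal.one_ne_top⟩
    have htail : ∃ R : ℝ, 0 < R ∧ ∫⁻ t in Ioi R, ENNReal.ofReal (E1 t) ≤ η := by
      have hmono : Antitone fun n : ℕ => Ioi ((n:ℝ)) :=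
        fun a b hab => Ioi_subset_Ioi (by exact_mod_cast hab)
      have hiInter : ⋂ n : ℕ, Ioi ((n:ℝ)) = (∅ : Set ℝ) := by
        ext x
        simp only [mem_iInter, mem_Ioi, mem_empty_iff_false, iff_false, not_forall, not_lt]
        obtain ⟨n, hn⟩ := exists_nat_gt x
        exact ⟨n, hn.le⟩
      have hfin : ∃ n : ℕ, ν (Ioi ((n:ℝ))) ≠ ⊤ := by
        refine ⟨0, ?_⟩
        simp only [Nat.cast_zero]
        rw [hν_apply 0 le_rfl, E1_lintegral_eq_one]
        exact ENNReal.one_ne_top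
      have := tendsto_measure_iInter_atTop
        (fun n : ℕ => (measurableSet_Ioi : MeasurableSet (Ioi ((n:ℝ)))).nullMeasurableSet)
        hmono hfin
      rw [hiInter, measure_empty] at this
      obtain ⟨N, hN⟩ := (this.eventually_lt_const hηpos).exists
      refine ⟨(N:ℝ) + 1, by positivity, ?_⟩
      have hsub : Ioi ((N:ℝ) + 1) ⊆ Ioi ((N:ℝ)) := Ioi_subset_Ioi (by linarith)
      calc ∫⁻ t in Ioi ((N:ℝ)+1), ENNReal.ofReal (E1 t)
          = ν (Ioi ((N:ℝ)+1)) := (hν_apply _ (by positivity)).symm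
        _ ≤ ν (Ioi ((N:ℝ))) := measure_mono hsub
        _ ≤ η := hN.le
    obtain ⟨R, hRpos, hRtail⟩ := htail
    -- translation cutoff
    obtain ⟨δ, hδpos, hδ⟩ := translation_small c hc hcm (half_pos hr)
    have hmem : Ioo (0:ℝ) (δ / R) ∈ nhdsWithin (0:ℝ) (Ioi 0) :=
      Ioo_mem_nhdsGT_of_mem ⟨le_refl 0, div_pos hδpos hRpos⟩
    filter_upwards [hmem] with α hα
    have hαpos : 0 < α := hα.1
    -- split the integral
    have hsplit : A α ≤ (∫⁻ t in Ioc (0:ℝ) R, ENNReal.ofReal (E1 t) * W (α * t))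
        + ∫⁻ t in Ioi R, ENNReal.ofReal (E1 t) * W (α * t) := by
      refine le_trans (lintegral_mono_set ?_) (lintegral_union_le _ _ _)
      intro t ht
      rcases le_or_gt t R with h | h
      · exact Or.inl ⟨ht, h⟩
      · exact Or.inr h
    have hterm1 : ∫⁻ t in Ioc (0:ℝ) R, ENNReal.ofReal (E1 t) * W (α * t)
        ≤ ENNReal.ofReal (r/2) := by
      have hb : ∀ᵐ t ∂(volume.restrict (Ioc (0:ℝ) R)),
          ENNReal.ofReal (E1 t) * W (α * t)
            ≤ ENNReal.ofReal (E1 t) * ENNReal.ofReal (r/2) := by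
        filter_upwards [ae_restrict_mem measurableSet_Ioc] with t ht
        refine mul_le_mul_right ?_ _
        refine hδ (α * t) ?_
        rw [abs_of_nonneg (mul_nonneg hαpos.le (le_of_lt ht.1))]
        calc α * t ≤ α * R := by nlinarith [ht.1, ht.2, hαpos]
          _ < (δ / R) * R := by nlinarith [hα.2, hRpos]
          _ = δ := div_mul_cancel₀ _ (ne_of_gt hRpos)
      calc ∫⁻ t in Ioc (0:ℝ) R, ENNReal.ofReal (E1 t) * W (α * t)
          ≤ ∫⁻ t in Ioc (0:ℝ) R, ENNReal.ofReal (E1 t) * ENNReal.ofReal (r/2) :=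
            lintegral_mono_ae hb
        _ = (∫⁻ t in Ioc (0:ℝ) R, ENNReal.ofReal (E1 t)) * ENNReal.ofReal (r/2) :=
            lintegral_mul_const _ E1_measurable.ennreal_ofReal
        _ ≤ 1 * ENNReal.ofReal (r/2) := by
            refine mul_le_mul_left ?_ _
            rw [← E1_lintegral_eq_one]
            exact lintegral_mono_set Ioc_subset_Ioi_self
        _ = ENNReal.ofReal (r/2) := one_mul _
    have hterm2 : ∫⁻ t in Ioi R, ENNReal.ofReal (E1 t) * W (α * t)
        ≤ ENNReal.ofReal (r/2) := by
      calc ∫⁻ t in Ioi R, ENNReal.ofReal (E1 t) * W (α * t)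
          ≤ ∫⁻ t in Ioi R, ENNReal.ofReal (E1 t) * (C + C) :=
            lintegral_mono fun t => mul_le_mul_right (hW2C _) _
        _ = (∫⁻ t in Ioi R, ENNReal.ofReal (E1 t)) * (C + C) :=
            lintegral_mul_const _ E1_measurable.ennreal_ofReal
        _ ≤ η * (C + C) := mul_le_mul_left hRtail _
        _ ≤ η * (C + C + 1) := mul_le_mul_right (le_add_of_nonneg_right zero_le_one) _
        _ ≤ ENNReal.ofReal (r/2) := by
            rw [hη_def, mul_comm]
            refine le_of_eq (ENNReal.mul_div_cancel ?_ ?_)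
            · exact (lt_of_lt_of_le zero_lt_one le_add_self).ne'
            · exact ENNReal.add_ne_top.mpr ⟨ENNReal.add_ne_top.mpr ⟨hCne, hCne⟩,
                ENNReal.one_ne_top⟩
    calc A α ≤ ENNReal.ofReal (r/2) + ENNReal.ofReal (r/2) :=
          hsplit.trans (add_le_add hterm1 hterm2)
      _ = ENNReal.ofReal r := by
          rw [← ENNReal.ofReal_add (by positivity) (by positivity)]
          norm_num
      _ ≤ ε := hrε
  -- squeeze
  have hupper : Filter.Tendsto (fun α => (A α).toReal) (nhdsWithin 0 (Ioi 0)) (nhds 0) := by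
    have := (ENNReal.tendsto_toReal (ENNReal.zero_ne_top)).comp hA_tendsto
    simpa [Function.comp_def] using this
  refine tendsto_of_tendsto_of_tendsto_of_le_of_le' tendsto_const_nhds hupper ?_ ?_
  · filter_upwards [self_mem_nhdsWithin] with α hα
    exact intervalIntegral.integral_nonneg zero_le_one fun x _ => abs_nonneg _
  · filter_upwards [self_mem_nhdsWithin] with α hα
    have h1 := hkey α hα
    have h2 : (0:ℝ) ≤ ∫ x in (0:ℝ)..1, |S0' α f x - f x| :=
      intervalIntegral.integral_nonneg zero_le_one fun x _ => abs_nonneg _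
    calc ∫ x in (0:ℝ)..1, |S0' α f x - f x|
        = (ENNReal.ofReal (∫ x in (0:ℝ)..1, |S0' α f x - f x|)).toReal :=
          (ENNReal.toReal_ofReal h2).symm
      _ ≤ (A α).toReal := ENNReal.toReal_mono (hAne α) h1

/-- for `f ∈ L¹([0,1])`, `‖S_0^α f − f‖_{L¹([0,1])} → 0` as `α → 0⁺`. -/
theorem stmt17 (f : ℝ → ℝ) (hf : IntegrableOn f (Icc (0:ℝ) 1)) :
    Filter.Tendsto (fun α : ℝ => ∫ x in (0:ℝ)..1, |S0 α f x - f x|)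
      (nhdsWithin 0 (Ioi 0)) (nhds 0) := by
  have hSS : S0 = S0' := rfl
  rw [hSS]
  exact stmt17' f hf

end
end

section
/- Let ω be a weight on [0,1] and let k, k' ∈ K_ω be conjugate kernels. Assume (A1): for every y ∈ C([0,1];ℝ), the function x ↦ ∫_0^x k(x,s) y(s) ω(s) ds is continuous on [0,1]; and (A2): f : [0,1] × ℝ → ℝ is continuous and there is a constant c_f > 0 with |f(t,x₁) − f(t,x₂)| ≤ c_f |x₁ − x₂| for all (t,x₁,x₂) ∈ [0,1] × ℝ × ℝ and c_f · sup_{t∈[0,1]} ∫_0^t k(t,s) ω(s) ds < 1. Then there exists one and only one u ∈ C([0,1];ℝ) such that u(t) = ∫_0^t k(t,s) f(s,u(s)) ω(s) ds for all t ∈ [0,1] (equivalently, u is the unique continuous solution of the boundary value problem (D_0^{k'} u)(t) = f(t,u(t)) a.e. on [0,1] with (I_0^{k'} u)(0) = 0). -/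
open MeasureTheory Set

noncomputable section

lemma dense_of_full (S : Set ℝ) (hS : volume (Ioo (0:ℝ) 1 \ S) = 0) :
    Icc (0:ℝ) 1 ⊆ closure S := by
  intro x hx
  rw [Metric.mem_closure_iff]
  intro eps heps
  by_contra hcon
  push_neg at hcon
  set a := max 0 (x - eps) with ha
  set b := min 1 (x + eps) with hb
  have hab : a < b := by
    rw [ha, hb]
    apply max_lt <;> apply lt_min <;> linarith [hx.1, hx.2]
  have hsub : Ioo a b ⊆ Ioo (0:ℝ) 1 \ S := by
    intro y hy
    refine ⟨⟨lt_of_le_of_lt (le_max_left _ _) hy.1, lt_of_lt_of_le hy.2 (min_le_left _ _)⟩, ?_⟩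
    intro hyS
    have h1 : x - eps < y := lt_of_le_of_lt (le_max_right _ _) hy.1
    have h2 : y < x + eps := lt_of_lt_of_le hy.2 (min_le_right _ _)
    have hd := hcon y hyS
    rw [Real.dist_eq] at hd
    have habs : |x - y| < eps := abs_sub_lt_iff.2 ⟨by linarith, by linarith⟩
    linarith
  have hm : volume (Ioo a b) ≤ volume (Ioo (0:ℝ) 1 \ S) := measure_mono hsub
  rw [hS, Real.volume_Ioo] at hm
  simp only [le_zero_iff, ENNReal.ofReal_eq_zero] at hm
  linarith

lemma ae_integrable (ω : ℝ → ℝ) (hωm : Measurable ω) (hωpos : ∀ x ∈ Icc (0:ℝ) 1, 0 < ω x)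
    (hωtop : essSup (fun x => ENNReal.ofReal (ω x)) (volume.restrict (Icc (0:ℝ) 1)) < ⊤)
    (k k' : ℝ → ℝ → ℝ) (hkm : Measurable (Function.uncurry k))
    (hkpos : ∀ x y : ℝ, 0 ≤ y → y < x → x ≤ 1 → 0 < k x y)
    (hk'm : Measurable (Function.uncurry k'))
    (hk'pos : ∀ x y : ℝ, 0 ≤ y → y < x → x ≤ 1 → 0 < k' x y)
    (hconj : Conjugate 0 1 ω k k') :
    ∀ᵐ t ∂(volume.restrict (Ioo (0:ℝ) 1)),
      IntegrableOn (fun s => k t s * ω s) (Ioc 0 t) volume := by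
  classical
  -- conjugacy gives genuine integrability (else the interval integral would be 0, not 1)
  have hconjInt : ∀ y : ℝ, 0 ≤ y → y < 1 →
      IntegrableOn (fun z => k' 1 z * k z y * ω z) (Ioc y 1) volume ∧
      (∫ z in Ioc y 1, k' 1 z * k z y * ω z) = 1 := by
    intro y hy0 hy1
    have h1 := (hconj 1 y hy0 hy1 le_rfl).2
    unfold deltaK at h1
    rw [intervalIntegral.integral_of_le hy1.le] at h1
    refine ⟨?_, h1⟩
    by_contra hni
    rw [integral_undef hni] at h1
    norm_num at h1
  set Ψ : ℝ → ℝ → ENNReal := fun z y =>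
    if 0 < z ∧ z ≤ 1 ∧ 0 < y ∧ y ≤ z then
      ENNReal.ofReal (k' 1 z * ω z) * ENNReal.ofReal (k z y * ω y) else 0 with hΨdef
  have hset : MeasurableSet {p : ℝ × ℝ | 0 < p.1 ∧ p.1 ≤ 1 ∧ 0 < p.2 ∧ p.2 ≤ p.1} := by
    simp only [setOf_and]
    exact (measurableSet_lt measurable_const measurable_fst).inter
      ((measurableSet_le measurable_fst measurable_const).inter
        ((measurableSet_lt measurable_const measurable_snd).inter
          (measurableSet_le measurable_snd measurable_fst)))
  have hF : Measurable fun p : ℝ × ℝ =>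
      ENNReal.ofReal (k' 1 p.1 * ω p.1) * ENNReal.ofReal (k p.1 p.2 * ω p.2) := by
    refine Measurable.mul (f := fun p : ℝ × ℝ => ENNReal.ofReal (k' 1 p.1 * ω p.1))
      (g := fun p : ℝ × ℝ => ENNReal.ofReal (k p.1 p.2 * ω p.2)) ?_ ?_
    · exact ((hk'm.comp (measurable_const.prodMk measurable_fst)).mul
        (hωm.comp measurable_fst)).ennreal_ofReal
    · exact (hkm.mul (hωm.comp measurable_snd)).ennreal_ofReal
  have hΨm : Measurable (Function.uncurry Ψ) := by
    rw [hΨdef]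
    exact Measurable.ite hset hF measurable_const
  -- bound on the ω-integral
  have hE : ∫⁻ y in Ioc (0:ℝ) 1, ENNReal.ofReal (ω y) < ⊤ := by
    have hle : ∀ᵐ y ∂volume.restrict (Ioc (0:ℝ) 1), ENNReal.ofReal (ω y) ≤
        essSup (fun x => ENNReal.ofReal (ω x)) (volume.restrict (Icc (0:ℝ) 1)) :=
      ae_mono (Measure.restrict_mono Ioc_subset_Icc_self le_rfl)
        (ae_le_essSup (f := fun x => ENNReal.ofReal (ω x)))
    calc ∫⁻ y in Ioc (0:ℝ) 1, ENNReal.ofReal (ω y)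
        ≤ ∫⁻ _ in Ioc (0:ℝ) 1, essSup (fun x => ENNReal.ofReal (ω x))
            (volume.restrict (Icc (0:ℝ) 1)) := lintegral_mono_ae hle
      _ = essSup (fun x => ENNReal.ofReal (ω x)) (volume.restrict (Icc (0:ℝ) 1)) *
            volume (Ioc (0:ℝ) 1) := setLIntegral_const _ _
      _ < ⊤ := by
          rw [Real.volume_Ioc]
          exact ENNReal.mul_lt_top hωtop (by norm_num)
  -- identify the z-sections
  have hL : ∀ z, (∫⁻ y, Ψ z y) = (Ioc (0:ℝ) 1).indicator (fun z =>
      ENNReal.ofReal (k' 1 z * ω z) *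
        ∫⁻ y in Ioc (0:ℝ) z, ENNReal.ofReal (k z y * ω y)) z := by
    intro z
    by_cases hz : z ∈ Ioc (0:ℝ) 1
    · rw [indicator_of_mem hz]
      have h1 : ∀ y, Ψ z y = (Ioc (0:ℝ) z).indicator (fun y =>
          ENNReal.ofReal (k' 1 z * ω z) * ENNReal.ofReal (k z y * ω y)) y := by
        intro y
        simp only [hΨdef, indicator_apply, mem_Ioc]
        by_cases hy : 0 < y ∧ y ≤ z
        · rw [if_pos ⟨hz.1, hz.2, hy⟩, if_pos hy]
        · rw [if_neg (by rintro ⟨_, _, h3, h4⟩; exact hy ⟨h3, h4⟩), if_neg hy]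
      simp_rw [h1]
      rw [lintegral_indicator measurableSet_Ioc]
      exact lintegral_const_mul' _ _ ENNReal.ofReal_ne_top
    · rw [indicator_of_notMem hz]
      have h1 : ∀ y, Ψ z y = 0 := by
        intro y
        simp only [hΨdef]
        rw [if_neg (by rintro ⟨h1, h2, _⟩; exact hz ⟨h1, h2⟩)]
      simp [h1]
  -- bound the y-sections
  have hR : ∀ y, (∫⁻ z, Ψ z y) ≤ (Ioc (0:ℝ) 1).indicator (fun y =>
      ENNReal.ofReal (ω y)) y := by
    intro y
    by_cases hy : y ∈ Ioc (0:ℝ) 1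
    · rw [indicator_of_mem hy]
      have h1 : ∀ z, Ψ z y = (Icc y 1).indicator (fun z =>
          ENNReal.ofReal (k' 1 z * ω z) * ENNReal.ofReal (k z y * ω y)) z := by
        intro z
        simp only [hΨdef, indicator_apply, mem_Icc]
        by_cases hz : y ≤ z ∧ z ≤ 1
        · rw [if_pos ⟨lt_of_lt_of_le hy.1 hz.1, hz.2, hy.1, hz.1⟩, if_pos hz]
        · rw [if_neg (by rintro ⟨_, h2, _, h4⟩; exact hz ⟨h4, h2⟩), if_neg hz]
      simp_rw [h1]
      rw [lintegral_indicator measurableSet_Icc,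
        ← Measure.restrict_congr_set Ioc_ae_eq_Icc]
      by_cases hy1 : y < 1
      · have hint := hconjInt y hy.1.le hy1
        have hmem : ∀ᵐ z ∂volume.restrict (Ioc y 1), z ∈ Ioo y 1 := by
          rw [← Measure.restrict_congr_set Ioo_ae_eq_Ioc]
          exact ae_restrict_mem measurableSet_Ioo
        have hcongr : ∀ᵐ z ∂volume.restrict (Ioc y 1),
            ENNReal.ofReal (k' 1 z * ω z) * ENNReal.ofReal (k z y * ω y)
              = ENNReal.ofReal (k' 1 z * k z y * ω z) * ENNReal.ofReal (ω y) := by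
          filter_upwards [hmem] with z hz
          have hk'z : 0 < k' 1 z := hk'pos 1 z (le_trans hy.1.le hz.1.le) hz.2 le_rfl
          have hkzy : 0 < k z y := hkpos z y hy.1.le hz.1 hz.2.le
          have hωz : 0 < ω z := hωpos z ⟨le_trans hy.1.le hz.1.le, hz.2.le⟩
          rw [← ENNReal.ofReal_mul (by positivity), ← ENNReal.ofReal_mul (by positivity)]
          congr 1
          ring
        rw [lintegral_congr_ae hcongr,
          lintegral_mul_const' _ _ ENNReal.ofReal_ne_top]
        have hnn : 0 ≤ᵐ[volume.restrict (Ioc y 1)] fun z => k' 1 z * k z y * ω z := by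
          filter_upwards [hmem] with z hz
          have hk'z : 0 < k' 1 z := hk'pos 1 z (le_trans hy.1.le hz.1.le) hz.2 le_rfl
          have hkzy : 0 < k z y := hkpos z y hy.1.le hz.1 hz.2.le
          have hωz : 0 < ω z := hωpos z ⟨le_trans hy.1.le hz.1.le, hz.2.le⟩
          positivity
        rw [← ofReal_integral_eq_lintegral_ofReal hint.1 hnn, hint.2]
        simp
      · have hye : y = 1 := le_antisymm hy.2 (not_lt.1 hy1)
        rw [show Ioc y 1 = ∅ from Ioc_eq_empty (by rw [hye]; exact lt_irrefl 1)]
        simp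
    · have h1 : ∀ z, Ψ z y = 0 := by
        intro z
        simp only [hΨdef]
        rw [if_neg (by rintro ⟨_, h2, h3, h4⟩; exact hy ⟨h3, le_trans h4 h2⟩)]
      simp [h1, hy]
  -- the key finiteness
  have key : (∫⁻ z in Ioc (0:ℝ) 1, ENNReal.ofReal (k' 1 z * ω z) *
      ∫⁻ y in Ioc (0:ℝ) z, ENNReal.ofReal (k z y * ω y)) < ⊤ := by
    calc (∫⁻ z in Ioc (0:ℝ) 1, ENNReal.ofReal (k' 1 z * ω z) *
        ∫⁻ y in Ioc (0:ℝ) z, ENNReal.ofReal (k z y * ω y))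
        = ∫⁻ z, (Ioc (0:ℝ) 1).indicator (fun z => ENNReal.ofReal (k' 1 z * ω z) *
            ∫⁻ y in Ioc (0:ℝ) z, ENNReal.ofReal (k z y * ω y)) z :=
          (lintegral_indicator measurableSet_Ioc _).symm
      _ = ∫⁻ z, ∫⁻ y, Ψ z y := lintegral_congr fun z => (hL z).symm
      _ = ∫⁻ y, ∫⁻ z, Ψ z y := lintegral_lintegral_swap hΨm.aemeasurable
      _ ≤ ∫⁻ y, (Ioc (0:ℝ) 1).indicator (fun y => ENNReal.ofReal (ω y)) y :=
          lintegral_mono hR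
      _ = ∫⁻ y in Ioc (0:ℝ) 1, ENNReal.ofReal (ω y) :=
          lintegral_indicator measurableSet_Ioc _
      _ < ⊤ := hE
  -- measurability of the section integrand
  have hGm : Measurable fun z => ∫⁻ y in Ioc (0:ℝ) z, ENNReal.ofReal (k z y * ω y) := by
    have h1 : ∀ z, (∫⁻ y in Ioc (0:ℝ) z, ENNReal.ofReal (k z y * ω y))
        = ∫⁻ y, (fun p : ℝ × ℝ => if 0 < p.2 ∧ p.2 ≤ p.1 then
            ENNReal.ofReal (k p.1 p.2 * ω p.2) else 0) (z, y) := by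
      intro z
      rw [← lintegral_indicator measurableSet_Ioc]
      refine lintegral_congr fun y => ?_
      simp only [indicator_apply, mem_Ioc]
    have hfm : Measurable (fun p : ℝ × ℝ => if 0 < p.2 ∧ p.2 ≤ p.1 then
        ENNReal.ofReal (k p.1 p.2 * ω p.2) else 0) := by
      refine Measurable.ite ?_ (hkm.mul (hωm.comp measurable_snd)).ennreal_ofReal
        measurable_const
      simp only [setOf_and]
      exact (measurableSet_lt measurable_const measurable_snd).inter
        (measurableSet_le measurable_snd measurable_fst)
    simp_rw [h1]
    exact hfm.lintegral_prod_right'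
  have hmeas2 : Measurable fun z => ENNReal.ofReal (k' 1 z * ω z) *
      ∫⁻ y in Ioc (0:ℝ) z, ENNReal.ofReal (k z y * ω y) :=
    (((hk'm.comp (measurable_const.prodMk measurable_id)).mul hωm).ennreal_ofReal).mul hGm
  have hae := ae_lt_top' hmeas2.aemeasurable key.ne
  have hae' : ∀ᵐ z ∂volume.restrict (Ioo (0:ℝ) 1),
      ENNReal.ofReal (k' 1 z * ω z) *
        (∫⁻ y in Ioc (0:ℝ) z, ENNReal.ofReal (k z y * ω y)) < ⊤ :=
    ae_mono (Measure.restrict_mono Ioo_subset_Ioc_self le_rfl) hae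
  filter_upwards [hae', ae_restrict_mem measurableSet_Ioo] with t hft ht
  have hpos : 0 < k' 1 t * ω t :=
    mul_pos (hk'pos 1 t ht.1.le ht.2 le_rfl) (hωpos t ⟨ht.1.le, ht.2.le⟩)
  have hGt : (∫⁻ y in Ioc (0:ℝ) t, ENNReal.ofReal (k t y * ω y)) < ⊤ := by
    by_contra htop
    rw [not_lt, top_le_iff] at htop
    rw [htop, ENNReal.mul_top (ENNReal.ofReal_pos.mpr hpos).ne'] at hft
    exact lt_irrefl _ hft
  constructor
  · exact ((hkm.comp (measurable_const.prodMk measurable_id)).mul hωm).aestronglyMeasurable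
  · rw [hasFiniteIntegral_iff_norm]
    have hmem : ∀ᵐ s ∂volume.restrict (Ioc (0:ℝ) t), s ∈ Ioo 0 t := by
      rw [← Measure.restrict_congr_set Ioo_ae_eq_Ioc]
      exact ae_restrict_mem measurableSet_Ioo
    have hcongr : ∀ᵐ s ∂volume.restrict (Ioc (0:ℝ) t),
        ENNReal.ofReal ‖k t s * ω s‖ = ENNReal.ofReal (k t s * ω s) := by
      filter_upwards [hmem] with s hs
      rw [Real.norm_eq_abs, abs_of_nonneg (le_of_lt (mul_pos
        (hkpos t s hs.1.le hs.2 ht.2.le) (hωpos s ⟨hs.1.le, le_trans hs.2.le ht.2.le⟩)))]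
    rw [lintegral_congr_ae hcongr]
    exact hGt

lemma key_bound (ω : ℝ → ℝ) (hωm : Measurable ω) (hωpos : ∀ x ∈ Icc (0:ℝ) 1, 0 < ω x)
    (k : ℝ → ℝ → ℝ) (hkm : Measurable (Function.uncurry k))
    (hkpos : ∀ x y : ℝ, 0 ≤ y → y < x → x ≤ 1 → 0 < k x y)
    (t : ℝ) (ht0 : 0 ≤ t) (ht1 : t ≤ 1)
    (hInt : IntegrableOn (fun s => k t s * ω s) (Ioc 0 t) volume)
    (y₁ y₂ : ℝ → ℝ) (hy₁ : ContinuousOn y₁ (Icc 0 1)) (hy₂ : ContinuousOn y₂ (Icc 0 1))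
    (C : ℝ) (hC : ∀ s ∈ Icc (0:ℝ) 1, |y₁ s - y₂ s| ≤ C) :
    |(∫ s in (0:ℝ)..t, k t s * y₁ s * ω s) - ∫ s in (0:ℝ)..t, k t s * y₂ s * ω s| ≤
      C * ∫ s in (0:ℝ)..t, k t s * ω s := by
  have hsub : Ioc (0:ℝ) t ⊆ Icc (0:ℝ) 1 := fun s hs => ⟨hs.1.le, le_trans hs.2 ht1⟩
  have hmem : ∀ᵐ s ∂volume.restrict (Ioc (0:ℝ) t), s ∈ Ioo 0 t := by
    rw [← Measure.restrict_congr_set Ioo_ae_eq_Ioc]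
    exact ae_restrict_mem measurableSet_Ioo
  have hI : ∀ y : ℝ → ℝ, ContinuousOn y (Icc 0 1) →
      IntegrableOn (fun s => k t s * y s * ω s) (Ioc 0 t) volume := by
    intro y hy
    obtain ⟨B, hB⟩ := isCompact_Icc.exists_bound_of_continuousOn hy
    have haem : AEStronglyMeasurable (fun s => k t s * y s * ω s)
        (volume.restrict (Ioc 0 t)) := by
      have h1 : AEMeasurable y (volume.restrict (Ioc (0:ℝ) t)) :=
        (hy.aemeasurable measurableSet_Icc).mono_measure (Measure.restrict_mono hsub le_rfl)
      exact (((hkm.comp (measurable_const.prodMk measurable_id)).aemeasurable.mul h1).mul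
        hωm.aemeasurable).aestronglyMeasurable
    refine Integrable.mono' (hInt.const_mul B) haem ?_
    filter_upwards [hmem] with s hs
    have hks : 0 < k t s := hkpos t s hs.1.le hs.2 ht1
    have hωs : 0 < ω s := hωpos s (hsub ⟨hs.1, hs.2.le⟩)
    have hBs := hB s (hsub ⟨hs.1, hs.2.le⟩)
    rw [Real.norm_eq_abs, abs_mul, abs_mul, abs_of_pos hks, abs_of_pos hωs]
    calc k t s * |y s| * ω s ≤ k t s * B * ω s := by
          apply mul_le_mul_of_nonneg_right _ hωs.le
          exact mul_le_mul_of_nonneg_left (by simpa using hBs) hks.le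
      _ = B * (k t s * ω s) := by ring
  have h1 := hI y₁ hy₁
  have h2 := hI y₂ hy₂
  rw [intervalIntegral.integral_of_le ht0, intervalIntegral.integral_of_le ht0,
    intervalIntegral.integral_of_le ht0, ← integral_sub h1 h2]
  calc |∫ s in Ioc (0:ℝ) t, (k t s * y₁ s * ω s - k t s * y₂ s * ω s)|
      ≤ ∫ s in Ioc (0:ℝ) t, |k t s * y₁ s * ω s - k t s * y₂ s * ω s| := by
        simpa [Real.norm_eq_abs] using norm_integral_le_integral_norm
          (μ := volume.restrict (Ioc (0:ℝ) t))
          (fun s => k t s * y₁ s * ω s - k t s * y₂ s * ω s)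
    _ ≤ ∫ s in Ioc (0:ℝ) t, C * (k t s * ω s) := by
        apply integral_mono_ae ((h1.sub h2).abs) (hInt.const_mul C)
        filter_upwards [hmem] with s hs
        simp only [Pi.sub_apply]
        have hks : 0 < k t s := hkpos t s hs.1.le hs.2 ht1
        have hωs : 0 < ω s := hωpos s (hsub ⟨hs.1, hs.2.le⟩)
        have hrw : k t s * y₁ s * ω s - k t s * y₂ s * ω s
            = (k t s * ω s) * (y₁ s - y₂ s) := by ring
        rw [hrw, abs_mul, abs_of_pos (mul_pos hks hωs)]
        calc (k t s * ω s) * |y₁ s - y₂ s| ≤ (k t s * ω s) * C :=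
              mul_le_mul_of_nonneg_left (hC s (hsub ⟨hs.1, hs.2.le⟩)) (mul_pos hks hωs).le
          _ = C * (k t s * ω s) := by ring
    _ = C * ∫ s in Ioc (0:ℝ) t, k t s * ω s := integral_const_mul _ _

lemma contract_bound (ω : ℝ → ℝ) (hω : IsWeight 0 1 ω) (k k' : ℝ → ℝ → ℝ)
    (hk : MemK 0 1 ω k) (hk' : MemK 0 1 ω k') (hconj : Conjugate 0 1 ω k k')
    (hA1 : ∀ y : ℝ → ℝ, ContinuousOn y (Icc 0 1) →
      ContinuousOn (fun x => ∫ s in (0:ℝ)..x, k x s * y s * ω s) (Icc 0 1))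
    (f : ℝ → ℝ → ℝ) (hfc : Continuous (Function.uncurry f))
    (c_f : ℝ) (hc : 0 < c_f)
    (hlip : ∀ t x₁ x₂ : ℝ, t ∈ Icc (0:ℝ) 1 → |f t x₁ - f t x₂| ≤ c_f * |x₁ - x₂|)
    (M : ℝ) (hM : ∀ t ∈ Icc (0:ℝ) 1, (∫ s in (0:ℝ)..t, k t s * ω s) ≤ M)
    (u v : ℝ → ℝ) (hu : ContinuousOn u (Icc 0 1)) (hv : ContinuousOn v (Icc 0 1))
    (D : ℝ) (hD : ∀ s ∈ Icc (0:ℝ) 1, |u s - v s| ≤ D) :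
    ∀ t ∈ Icc (0:ℝ) 1,
      |(∫ s in (0:ℝ)..t, k t s * f s (u s) * ω s) -
        ∫ s in (0:ℝ)..t, k t s * f s (v s) * ω s| ≤ c_f * M * D := by
  obtain ⟨hωm, hωpos, hωtop, -⟩ := hω
  obtain ⟨hkm, hkpos, -, -⟩ := hk
  obtain ⟨hk'm, hk'pos, -, -⟩ := hk'
  have hDnn : 0 ≤ D := le_trans (abs_nonneg _) (hD 0 (left_mem_Icc.2 zero_le_one))
  have hyu : ContinuousOn (fun s => f s (u s)) (Icc (0:ℝ) 1) :=
    by have h := hfc.comp_continuousOn (continuousOn_id.prodMk hu); exact h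
  have hyv : ContinuousOn (fun s => f s (v s)) (Icc (0:ℝ) 1) :=
    by have h := hfc.comp_continuousOn (continuousOn_id.prodMk hv); exact h
  have hae := ae_integrable ω hωm hωpos hωtop k k' hkm hkpos hk'm hk'pos hconj
  set S := {t : ℝ | t ∈ Ioo (0:ℝ) 1 ∧
    IntegrableOn (fun s => k t s * ω s) (Ioc 0 t) volume} with hSdef
  have hfull : volume (Ioo (0:ℝ) 1 \ S) = 0 := by
    have h0 : volume.restrict (Ioo (0:ℝ) 1)
        {t | ¬ IntegrableOn (fun s => k t s * ω s) (Ioc 0 t) volume} = 0 := hae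
    have hsub2 : Ioo (0:ℝ) 1 \ S ⊆
        {t | ¬ IntegrableOn (fun s => k t s * ω s) (Ioc 0 t) volume} ∩ Ioo 0 1 := by
      intro x hx
      exact ⟨fun hi => hx.2 ⟨hx.1, hi⟩, hx.1⟩
    refine le_antisymm (le_trans (measure_mono hsub2) ?_) zero_le
    rw [← Measure.restrict_apply' measurableSet_Ioo]
    exact le_of_eq h0
  have hdense := dense_of_full S hfull
  have hΦu := hA1 _ hyu
  have hΦv := hA1 _ hyv
  have hg : ContinuousOn (fun x => |(∫ s in (0:ℝ)..x, k x s * f s (u s) * ω s) -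
      ∫ s in (0:ℝ)..x, k x s * f s (v s) * ω s|) (Icc 0 1) := (hΦu.sub hΦv).abs
  have hbound : ∀ x ∈ S, |(∫ s in (0:ℝ)..x, k x s * f s (u s) * ω s) -
      ∫ s in (0:ℝ)..x, k x s * f s (v s) * ω s| ≤ c_f * M * D := by
    intro x hx
    have hCx : ∀ s ∈ Icc (0:ℝ) 1, |f s (u s) - f s (v s)| ≤ c_f * D := by
      intro s hs
      calc |f s (u s) - f s (v s)| ≤ c_f * |u s - v s| := hlip s _ _ hs
        _ ≤ c_f * D := mul_le_mul_of_nonneg_left (hD s hs) hc.le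
    have h := key_bound ω hωm hωpos k hkm hkpos x hx.1.1.le hx.1.2.le hx.2 _ _ hyu hyv
      (c_f * D) hCx
    refine le_trans h ?_
    calc (c_f * D) * ∫ s in (0:ℝ)..x, k x s * ω s
        ≤ (c_f * D) * M :=
          mul_le_mul_of_nonneg_left (hM x ⟨hx.1.1.le, hx.1.2.le⟩) (by positivity)
      _ = c_f * M * D := by ring
  intro t ht
  have hne : (nhdsWithin t S).NeBot := mem_closure_iff_nhdsWithin_neBot.mp (hdense ht)
  have hSsub : S ⊆ Icc (0:ℝ) 1 := fun x hx => ⟨hx.1.1.le, hx.1.2.le⟩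
  have htend := ((hg t ht).mono hSsub).tendsto
  exact le_of_tendsto htend (eventually_nhdsWithin_of_forall hbound)

/-- existence and uniqueness of a continuous solution of the boundary value
problem `(D_0^{k'} u)(t) = f(t,u(t))`, `(I_0^{k'} u)(0) = 0`, stated in its equivalent fixed
point form `u(t) = ∫_0^t k(t,s) f(s,u(s)) ω(s) ds` on `[0,1]`, under (A1): `I_0^k` maps
`C([0,1])` into `C([0,1])`, and (A2): `f` continuous, Lipschitz in its second variable with
constant `c_f` satisfying `c_f ‖I_0^k 1‖_∞ < 1`. -/
theorem stmt19 (ω : ℝ → ℝ) (hω : IsWeight 0 1 ω) (k k' : ℝ → ℝ → ℝ)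
    (hk : MemK 0 1 ω k) (hk' : MemK 0 1 ω k') (hconj : Conjugate 0 1 ω k k')
    (hA1 : ∀ y : ℝ → ℝ, ContinuousOn y (Icc 0 1) →
      ContinuousOn (fun x => ∫ s in (0:ℝ)..x, k x s * y s * ω s) (Icc 0 1))
    (f : ℝ → ℝ → ℝ) (hfc : Continuous (Function.uncurry f))
    (c_f : ℝ) (hc : 0 < c_f)
    (hlip : ∀ t x₁ x₂ : ℝ, t ∈ Icc (0:ℝ) 1 → |f t x₁ - f t x₂| ≤ c_f * |x₁ - x₂|)
    (M : ℝ) (hM : ∀ t ∈ Icc (0:ℝ) 1, (∫ s in (0:ℝ)..t, k t s * ω s) ≤ M)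
    (hsmall : c_f * M < 1) :
    (∃ u : ℝ → ℝ, ContinuousOn u (Icc 0 1) ∧
      ∀ t ∈ Icc (0:ℝ) 1, u t = ∫ s in (0:ℝ)..t, k t s * f s (u s) * ω s) ∧
    (∀ u v : ℝ → ℝ,
      ContinuousOn u (Icc 0 1) →
      (∀ t ∈ Icc (0:ℝ) 1, u t = ∫ s in (0:ℝ)..t, k t s * f s (u s) * ω s) →
      ContinuousOn v (Icc 0 1) →
      (∀ t ∈ Icc (0:ℝ) 1, v t = ∫ s in (0:ℝ)..t, k t s * f s (v s) * ω s) →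
      EqOn u v (Icc 0 1)) := by
  have hMnn : 0 ≤ M := by
    have h0 := hM 0 (left_mem_Icc.2 zero_le_one)
    rwa [intervalIntegral.integral_same] at h0
  constructor
  · -- existence via Banach fixed point in C(Icc 0 1, ℝ)
    haveI : CompactSpace (Icc (0:ℝ) 1) := isCompact_iff_compactSpace.mp isCompact_Icc
    haveI : Nonempty (Icc (0:ℝ) 1) := ⟨⟨0, left_mem_Icc.2 zero_le_one⟩⟩
    have hEc : ∀ w : C(Icc (0:ℝ) 1, ℝ),
        Continuous (fun s : ℝ => w (projIcc 0 1 zero_le_one s)) :=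
      fun w => w.continuous.comp continuous_projIcc
    have hTc : ∀ w : C(Icc (0:ℝ) 1, ℝ), ContinuousOn
        (fun x => ∫ s in (0:ℝ)..x, k x s * f s (w (projIcc 0 1 zero_le_one s)) * ω s)
        (Icc 0 1) := by
      intro w
      exact hA1 _ (Continuous.continuousOn
        (hfc.comp (continuous_id.prodMk (hEc w))))
    let T : C(Icc (0:ℝ) 1, ℝ) → C(Icc (0:ℝ) 1, ℝ) := fun w =>
      ⟨fun p => ∫ s in (0:ℝ)..(p:ℝ), k p s * f s (w (projIcc 0 1 zero_le_one s)) * ω s,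
        continuousOn_iff_continuous_restrict.mp (hTc w)⟩
    have hq : (0:ℝ) ≤ c_f * M := by positivity
    have hlipT : LipschitzWith ⟨c_f * M, hq⟩ T := by
      apply LipschitzWith.of_dist_le_mul
      intro w₁ w₂
      change dist (T w₁) (T w₂) ≤ c_f * M * dist w₁ w₂
      rw [ContinuousMap.dist_le (mul_nonneg hq dist_nonneg)]
      intro p
      rw [Real.dist_eq]
      have hcb := contract_bound ω hω k k' hk hk' hconj hA1 f hfc c_f hc hlip M hM
        (fun s => w₁ (projIcc 0 1 zero_le_one s)) (fun s => w₂ (projIcc 0 1 zero_le_one s))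
        (hEc w₁).continuousOn (hEc w₂).continuousOn (dist w₁ w₂)
        (fun s _ => by
          rw [← Real.dist_eq]
          exact ContinuousMap.dist_apply_le_dist _) (p : ℝ) p.2
      exact hcb
    have hcontr : ContractingWith ⟨c_f * M, hq⟩ T := by
      constructor
      · exact NNReal.coe_lt_coe.mp hsmall
      · exact hlipT
    set w₀ := ContractingWith.fixedPoint T hcontr with hw₀
    have hfix : T w₀ = w₀ := hcontr.fixedPoint_isFixedPt
    refine ⟨fun s => w₀ (projIcc 0 1 zero_le_one s), (hEc w₀).continuousOn, fun t ht => ?_⟩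
    show w₀ (projIcc 0 1 zero_le_one t) = _
    rw [projIcc_of_mem zero_le_one ht]
    conv_lhs => rw [← hfix]
    rfl
  · -- uniqueness
    intro u v hu hequ hv heqv
    obtain ⟨t₀, ht₀, hmax⟩ := isCompact_Icc.exists_isMaxOn (nonempty_Icc.mpr zero_le_one)
      ((hu.sub hv).abs)
    have hD : ∀ s ∈ Icc (0:ℝ) 1, |u s - v s| ≤ |u t₀ - v t₀| := fun s hs => hmax hs
    have hb := contract_bound ω hω k k' hk hk' hconj hA1 f hfc c_f hc hlip M hM
      u v hu hv _ hD t₀ ht₀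
    rw [← hequ t₀ ht₀, ← heqv t₀ ht₀] at hb
    have hD0 : |u t₀ - v t₀| ≤ 0 := by
      by_contra hpos
      push_neg at hpos
      have := mul_lt_mul_of_pos_right hsmall hpos
      rw [one_mul] at this
      linarith
    intro s hs
    have h1 : |u s - v s| ≤ 0 := le_trans (hD s hs) hD0
    have h2 : u s - v s = 0 := abs_eq_zero.mp (le_antisymm h1 (abs_nonneg _))
    exact sub_eq_zero.mp h2

end
end
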